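/- arXiv:1007.5051 — 6 statements merged into one kernel-verified Lean document; each statement's English description precedes it below -/
import Mathlib

section
/- Let 0 < β ≤ 1, λ > 0, and let s > 0 satisfy λ < s^β. Then ∫₀^∞ s e^{−st} (1 − E_β(−λ t^β)) dt = λ/(λ + s^β), where E_β(−λ t^β) = ∑_{k=0}^∞ (−λ t^β)^k / Γ(1 + βk). -/
open Set Filter Topology MeasureTheory Real

/-- Lower bound for Gamma: `Γ(1+x) ≥ M^x e^{-M}`. -/
lemma gamma_lower (x M : ℝ) (hx : 0 ≤ x) (hM : 0 < M) :
    M ^ x * Real.exp (-M) ≤ Real.Gamma (1 + x) := by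
  rw [Real.Gamma_eq_integral (by linarith : (0:ℝ) < 1 + x)]
  simp only [add_sub_cancel_left]
  have hint : IntegrableOn (fun t : ℝ => Real.exp (-t) * t ^ x) (Ioi 0) := by
    simpa using Real.GammaIntegral_convergent (by linarith : (0:ℝ) < 1 + x)
  have hexp : IntegrableOn (fun t : ℝ => Real.exp (-t)) (Ioi M) := by
    simpa using exp_neg_integrableOn_Ioi M one_pos
  have h1 : M ^ x * Real.exp (-M) = ∫ t in Ioi M, Real.exp (-t) * M ^ x := by
    rw [MeasureTheory.integral_mul_const, integral_exp_neg_Ioi, mul_comm]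
  rw [h1]
  have h2 : (∫ t in Ioi M, Real.exp (-t) * M ^ x) ≤ ∫ t in Ioi M, Real.exp (-t) * t ^ x := by
    refine setIntegral_mono_on (hexp.mul_const _) (hint.mono_set (Ioi_subset_Ioi hM.le))
      measurableSet_Ioi fun t ht => ?_
    have : (0:ℝ) < t := hM.trans ht
    gcongr
    exact (le_of_lt ht)
  refine h2.trans (setIntegral_mono_set hint ?_ ?_)
  · filter_upwards [self_mem_ae_restrict measurableSet_Ioi] with t ht
    exact mul_nonneg (Real.exp_nonneg _) (Real.rpow_nonneg (le_of_lt ht) _)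
  · exact HasSubset.Subset.eventuallyLE (Ioi_subset_Ioi hM.le)

/-- The Mittag-Leffler series is summable for every real `z`. -/
lemma summable_ml (β z : ℝ) (hβ : 0 < β) :
    Summable fun k : ℕ => z ^ k / Real.Gamma (1 + β * k) := by
  set M : ℝ := (|z| + 1) ^ (1 / β) with hMdef
  have hM : 0 < M := Real.rpow_pos_of_pos (by positivity) _
  apply Summable.of_norm_bounded
    (g := fun k : ℕ => Real.exp M * (|z| / (|z| + 1)) ^ k)
  · apply Summable.mul_left
    apply summable_geometric_of_lt_one (by positivity)
    rw [div_lt_one (by positivity)]; linarith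
  · intro k
    have hx : (0:ℝ) ≤ β * k := by positivity
    have hG := gamma_lower (β * k) M hx hM
    have hMpow : M ^ (β * (k:ℝ)) = (|z| + 1) ^ k := by
      rw [hMdef, ← Real.rpow_mul (by positivity : (0:ℝ) ≤ |z| + 1),
        ← Real.rpow_natCast (|z| + 1) k]
      congr 1
      field_simp
    rw [hMpow] at hG
    have hGpos : (0:ℝ) < Real.Gamma (1 + β * k) := Real.Gamma_pos_of_pos (by positivity)
    rw [norm_div, norm_pow, Real.norm_of_nonneg hGpos.le]
    rw [div_le_iff₀ hGpos]
    calc |z| ^ k ≤ Real.exp M * (|z| / (|z| + 1)) ^ k * ((|z| + 1) ^ k * Real.exp (-M)) := by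
          rw [div_pow]
          rw [Real.exp_neg]
          have h1 : (0:ℝ) < (|z| + 1) ^ k := by positivity
          field_simp
          exact le_rfl
      _ ≤ _ := by
          gcongr

/-- Integrability of `t^p e^{-st}` on `(0,∞)`. -/
lemma integrableOn_rpow_exp (s p : ℝ) (hs : 0 < s) (hp : 0 ≤ p) :
    IntegrableOn (fun t : ℝ => t ^ p * Real.exp (-(s * t))) (Ioi 0) := by
  have h1 : IntegrableOn (fun x : ℝ => Real.exp (-x) * x ^ p) (Ioi 0) := by
    simpa using Real.GammaIntegral_convergent (by linarith : (0:ℝ) < p + 1)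
  have h2 : IntegrableOn (fun t : ℝ => Real.exp (-(s * t)) * (s * t) ^ p) (Ioi 0) := by
    have := (integrableOn_Ioi_comp_mul_left_iff
      (fun x : ℝ => Real.exp (-x) * x ^ p) 0 hs).mpr (by simpa using h1)
    simpa using this
  have h3 : IntegrableOn (fun t : ℝ => (s ^ p)⁻¹ * (Real.exp (-(s * t)) * (s * t) ^ p))
      (Ioi 0) := h2.const_mul _
  refine h3.congr_fun (fun t ht => ?_) measurableSet_Ioi
  have ht : (0:ℝ) < t := ht
  beta_reduce
  rw [Real.mul_rpow hs.le ht.le]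
  have : s ^ p ≠ 0 := by positivity
  field_simp

/-- Laplace integral: `∫₀^∞ t^p e^{-st} dt = (1/s)^(p+1) Γ(p+1)`. -/
lemma laplace_rpow (s p : ℝ) (hs : 0 < s) (hp : 0 ≤ p) :
    ∫ t in Ioi (0:ℝ), t ^ p * Real.exp (-(s * t))
      = (1 / s) ^ (p + 1) * Real.Gamma (p + 1) := by
  have := Real.integral_rpow_mul_exp_neg_mul_Ioi (a := p + 1) (r := s)
    (by linarith) hs
  simpa using this

/-- The Mittag-Leffler function `E_β(z) = ∑_{k=0}^∞ z^k / Γ(1 + βk)`. -/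
noncomputable def mittagLeffler (β z : ℝ) : ℝ :=
  ∑' k : ℕ, z ^ k / Real.Gamma (1 + β * k)

/-- For `0 < β ≤ 1`, `λ > 0` and `s > 0` with `λ < s^β`,
`∫₀^∞ s e^{−st} (1 − E_β(−λ t^β)) dt = λ/(λ + s^β)`. -/
theorem stmt3 (β lam s : ℝ) (hβ0 : 0 < β) (hβ1 : β ≤ 1) (hlam : 0 < lam)
    (hs : 0 < s) (hls : lam < s ^ β) :
    ∫ t in Set.Ioi (0:ℝ),
        s * Real.exp (-(s * t)) * (1 - mittagLeffler β (-(lam * t ^ β))) =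
      lam / (lam + s ^ β) := by
  have hsβ : (0:ℝ) < s ^ β := Real.rpow_pos_of_pos hs β
  set r : ℝ := lam / s ^ β with hrdef
  have hr0 : 0 < r := by positivity
  have hr1 : r < 1 := (div_lt_one hsβ).mpr hls
  set Γk : ℕ → ℝ := fun k => Real.Gamma (1 + β * ((k : ℝ) + 1)) with hΓk
  have hΓkpos : ∀ k, 0 < Γk k := fun k => Real.Gamma_pos_of_pos (by positivity)
  set C : ℕ → ℝ := fun k => -(s * (-lam) ^ (k + 1) / Γk k) with hC
  set f : ℕ → ℝ → ℝ :=
    fun k t => C k * (t ^ (β * ((k : ℝ) + 1)) * Real.exp (-(s * t))) with hf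
  -- pointwise identity on Ioi 0
  have hpt : ∀ t ∈ Set.Ioi (0:ℝ),
      s * Real.exp (-(s * t)) * (1 - mittagLeffler β (-(lam * t ^ β)))
        = ∑' k, f k t := by
    intro t ht
    have ht0 : (0:ℝ) < t := ht
    set z : ℝ := -(lam * t ^ β) with hz
    have hsum : Summable fun k : ℕ => z ^ k / Real.Gamma (1 + β * k) :=
      summable_ml β z hβ0
    have hML : mittagLeffler β z
        = 1 + ∑' k : ℕ, z ^ (k + 1) / Real.Gamma (1 + β * ((k : ℕ) + 1 : ℕ)) := by
      rw [mittagLeffler, Summable.tsum_eq_zero_add hsum]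
      norm_num
    have hzp : ∀ k : ℕ, z ^ (k + 1) = (-lam) ^ (k + 1) * t ^ (β * ((k : ℝ) + 1)) := by
      intro k
      have h1 : z = -lam * t ^ β := by rw [hz]; ring
      rw [h1, mul_pow, ← Real.rpow_natCast (t ^ β) (k + 1),
        ← Real.rpow_mul ht0.le]
      congr 2
      push_cast
      ring
    calc s * Real.exp (-(s * t)) * (1 - mittagLeffler β z)
        = -(s * Real.exp (-(s * t)))
            * ∑' k : ℕ, z ^ (k + 1) / Real.Gamma (1 + β * ((k : ℕ) + 1 : ℕ)) := by
          rw [hML]; ring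
      _ = ∑' k : ℕ, -(s * Real.exp (-(s * t)))
            * (z ^ (k + 1) / Real.Gamma (1 + β * ((k : ℕ) + 1 : ℕ))) := tsum_mul_left.symm
      _ = ∑' k, f k t := by
          refine tsum_congr fun k => ?_
          rw [hzp k, hf, hC, hΓk]
          push_cast
          ring
  -- integrability
  have hfi : ∀ k, IntegrableOn (f k) (Set.Ioi (0:ℝ)) := by
    intro k
    exact (integrableOn_rpow_exp s (β * ((k : ℝ) + 1)) hs (by positivity)).const_mul (C k)
  -- value of each integral
  have hlap : ∀ k : ℕ, ∫ t in Set.Ioi (0:ℝ), f k t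
      = C k * ((1 / s) ^ (β * ((k : ℝ) + 1) + 1) * Γk k) := by
    intro k
    rw [hf]
    rw [MeasureTheory.integral_const_mul, laplace_rpow s _ hs (by positivity)]
    rw [hΓk, add_comm (β * ((k : ℝ) + 1)) 1]
  have hpow : ∀ k : ℕ, ((1:ℝ) / s) ^ (β * ((k : ℝ) + 1) + 1)
      = ((s ^ β)⁻¹) ^ (k + 1) * s⁻¹ := by
    intro k
    rw [Real.rpow_add (by positivity), Real.rpow_one, one_div]
    congr 1
    · rw [← Real.inv_rpow hs.le, ← Real.rpow_natCast (s⁻¹ ^ β) (k + 1),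
        ← Real.rpow_mul (by positivity : (0:ℝ) ≤ s⁻¹)]
      congr 1
      push_cast
      ring
  have hfval : ∀ k : ℕ, ∫ t in Set.Ioi (0:ℝ), f k t = r * (-r) ^ k := by
    intro k
    rw [hlap k, hpow k, hC, hrdef]
    have h1 : Γk k ≠ 0 := (hΓkpos k).ne'
    have h2 : s ≠ 0 := hs.ne'
    have h3 : s ^ β ≠ 0 := hsβ.ne'
    field_simp
    have h4 : s ^ β * (s ^ β)⁻¹ = 1 := mul_inv_cancel₀ h3
    linear_combination (lam * lam ^ k * (s ^ β)⁻¹ ^ k * (-1) ^ k) * h4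
  -- norm integrals
  have hfnorm : ∀ k : ℕ, ∫ t in Set.Ioi (0:ℝ), ‖f k t‖ = r ^ (k + 1) := by
    intro k
    have habs : ∀ t ∈ Set.Ioi (0:ℝ), ‖f k t‖
        = |C k| * (t ^ (β * ((k : ℝ) + 1)) * Real.exp (-(s * t))) := by
      intro t ht
      have ht0 : (0:ℝ) < t := ht
      rw [hf, norm_mul, Real.norm_eq_abs, Real.norm_eq_abs,
        abs_of_nonneg (by positivity : (0:ℝ) ≤ t ^ (β * ((k : ℝ) + 1)) * Real.exp (-(s * t)))]
    have hΓeq : Real.Gamma (β * ((k : ℝ) + 1) + 1) = Γk k := by rw [hΓk, add_comm]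
    rw [setIntegral_congr_fun measurableSet_Ioi habs, MeasureTheory.integral_const_mul,
      laplace_rpow s _ hs (by positivity), hΓeq]
    have hCabs : |C k| = s * lam ^ (k + 1) / Γk k := by
      rw [hC, abs_neg, abs_div, abs_mul, abs_pow, abs_neg,
        abs_of_pos hlam, abs_of_pos hs, abs_of_pos (hΓkpos k)]
    rw [hCabs, hpow k, hrdef]
    have h1 : Γk k ≠ 0 := (hΓkpos k).ne'
    have h2 : s ≠ 0 := hs.ne'
    have h3 : s ^ β ≠ 0 := hsβ.ne'
    field_simp
    ring
  have hsumnorm : Summable fun k : ℕ => ∫ t in Set.Ioi (0:ℝ), ‖f k t‖ := by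
    simp_rw [hfnorm]
    simpa [pow_succ'] using (summable_geometric_of_lt_one hr0.le hr1).mul_left r
  -- assemble
  rw [setIntegral_congr_fun measurableSet_Ioi hpt,
    ← MeasureTheory.integral_tsum_of_summable_integral_norm hfi hsumnorm]
  calc (∑' k, ∫ t in Set.Ioi (0:ℝ), f k t)
      = ∑' k : ℕ, r * (-r) ^ k := tsum_congr hfval
    _ = r * (1 - (-r))⁻¹ := by
        rw [tsum_mul_left, tsum_geometric_of_norm_lt_one
          (by rwa [norm_neg, Real.norm_of_nonneg hr0.le])]
    _ = lam / (lam + s ^ β) := by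
        rw [hrdef, sub_neg_eq_add]
        have h3 : s ^ β ≠ 0 := hsβ.ne'
        have h4 : s ^ β + lam ≠ 0 := by positivity
        rw [one_add_div h3, inv_div, div_mul_div_comm, div_eq_div_iff (by positivity) (by positivity)]
        ring
end

section
/- Let λ > 0. Let (Ω, P) be a probability space carrying: (a) a jointly measurable process D : [0,∞) × Ω → [0,∞) such that almost surely the path t ↦ D(t) is strictly increasing, right-continuous, starts at D(0) = 0 and tends to ∞; such that for all 0 ≤ t₁ < t₂ < ⋯ < tₙ the increments D(t₁), D(t₂) − D(t₁), …, D(tₙ) − D(tₙ₋₁) are independent; and such that for all t, h ≥ 0 the increment D(t + h) − D(t) has the same distribution as D(h); and (b) a sequence (Wₙ)ₙ≥1 of i.i.d. random variables with P(Wₙ > t) = e^{−λt} for t ≥ 0, independent of the whole process D. Define the inverse process E(t, ω) = inf{r > 0 : D(r, ω) > t}. Set Vₙ = W₁ + ⋯ + Wₙ, let τₙ(ω) be the left limit of the path t ↦ D(t, ω) at Vₙ(ω), and set X₁ = τ₁, Xₙ = τₙ − τₙ₋₁ for n ≥ 2. Then the random variables (Xₙ)ₙ≥1 are i.i.d. with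 P(Xₙ > t) = E[e^{−λ E(t)}] for every t ≥ 0. -/
open Set Filter Topology MeasureTheory Real

open scoped ENNReal NNReal
open scoped ENNReal NNReal
set_option linter.unusedSectionVars false
set_option linter.unusedVariables false
set_option maxHeartbeats 1000000

namespace Stmt7Aux



noncomputable section

def vv (w : ℕ → ℝ) (k : ℕ) : ℝ := ∑ i ∈ Finset.range (k + 1), w i

def GG (k : ℕ) (p : (ℕ → ℝ) × (ℝ → ℝ)) : ℝ≥0∞ :=
  ⨆ q : ℚ, if 0 ≤ (q : ℝ) ∧ (q : ℝ) < vv p.1 k then ENNReal.ofReal (p.2 q) else 0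

def HH : ℕ → ((ℕ → ℝ) × (ℝ → ℝ)) → ℝ
  | 0 => fun p => (GG 0 p).toReal
  | (k + 1) => fun p => (GG (k + 1) p).toReal - (GG k p).toReal

def Esh (t : ℝ) (f : ℝ → ℝ) : ℝ≥0∞ :=
  ⨅ q : ℚ, if 0 < (q : ℝ) ∧ t < f q then ENNReal.ofReal (q : ℝ) else ∞

lemma measurable_vv (k : ℕ) : Measurable fun w : ℕ → ℝ => vv w k := by
  unfold vv; exact Finset.measurable_sum _ fun i _ => measurable_pi_apply i

lemma measurable_GG (k : ℕ) : Measurable (GG k) := by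
  unfold GG
  refine Measurable.iSup fun q => ?_
  refine Measurable.ite ?_ ?_ measurable_const
  · exact (MeasurableSet.const _).inter
      (measurableSet_lt measurable_const ((measurable_vv k).comp measurable_fst))
  · exact ENNReal.measurable_ofReal.comp ((measurable_pi_apply (q:ℝ)).comp measurable_snd)

lemma measurable_HH (k : ℕ) : Measurable (HH k) := by
  cases k with
  | zero => exact (measurable_GG 0).ennreal_toReal
  | succ k => exact ((measurable_GG (k+1)).ennreal_toReal).sub ((measurable_GG k).ennreal_toReal)

lemma measurable_Esh (t : ℝ) : Measurable (Esh t) := by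
  unfold Esh
  refine Measurable.iInf fun q => ?_
  refine Measurable.ite ?_ measurable_const measurable_const
  exact (MeasurableSet.const _).inter (measurableSet_lt measurable_const (measurable_pi_apply (q:ℝ)))

lemma vv_succ (w : ℕ → ℝ) (k : ℕ) : vv w (k+1) = vv w k + w (k+1) := by
  unfold vv; rw [Finset.sum_range_succ]

lemma vv_zero (w : ℕ → ℝ) : vv w 0 = w 0 := by
  unfold vv; rw [Finset.sum_range_one]

lemma vv_pos {w : ℕ → ℝ} (hw : ∀ i, 0 < w i) (k : ℕ) : 0 < vv w k := by
  unfold vv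
  exact Finset.sum_pos (fun i _ => hw i) ⟨0, Finset.mem_range.2 (Nat.succ_pos _)⟩

lemma vv_strictMono {w : ℕ → ℝ} (hw : ∀ i, 0 < w i) : StrictMono (vv w) :=
  strictMono_nat_of_lt_succ fun k => by rw [vv_succ]; linarith [hw (k+1)]

end

section


variable {Ω : Type*} [MeasurableSpace Ω] {P : Measure Ω} [IsProbabilityMeasure P] {D : ℝ → Ω → ℝ}

lemma measD (hDmeas : Measurable fun p : ℝ × Ω => D p.1 p.2) (u : ℝ) :
    Measurable fun ω => D u ω :=
  hDmeas.comp (measurable_const.prodMk measurable_id)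

/-- Small increments tend to zero in probability-ish: the measure of a fixed-size increment. -/
lemma tendsto_incr_zero
    (hDmeas : Measurable fun p : ℝ × Ω => D p.1 p.2)
    (hpath : ∀ᵐ ω ∂P, StrictMonoOn (fun t => D t ω) (Set.Ici 0) ∧
      (∀ t : ℝ, 0 ≤ t → ContinuousWithinAt (fun u => D u ω) (Set.Ici t) t) ∧
      D 0 ω = 0 ∧ Filter.Tendsto (fun t => D t ω) Filter.atTop Filter.atTop)
    {δ : ℕ → ℝ} (hδpos : ∀ m, 0 ≤ δ m) (hδ : Tendsto δ atTop (𝓝 0))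
    {ε : ℝ} (hε : 0 < ε) :
    Tendsto (fun m => P {ω | ε ≤ D (δ m) ω}) atTop (𝓝 0) := by
  have hae : ∀ᵐ ω ∂P, Tendsto (fun m => D (δ m) ω) atTop (𝓝 0) := by
    filter_upwards [hpath] with ω ⟨hmono, hrc, h0, htop⟩
    have h := hrc 0 le_rfl
    rw [ContinuousWithinAt, h0] at h
    exact h.comp (tendsto_nhdsWithin_of_tendsto_nhds_of_eventually_within δ hδ
      (Eventually.of_forall fun m => hδpos m))
  have hTM : TendstoInMeasure P (fun m ω => D (δ m) ω) atTop (fun _ => (0:ℝ)) :=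
    tendstoInMeasure_of_tendsto_ae (fun m => (measD hDmeas (δ m)).aestronglyMeasurable) hae
  have h := hTM (ENNReal.ofReal ε) (ENNReal.ofReal_pos.2 hε)
  refine tendsto_of_tendsto_of_tendsto_of_le_of_le tendsto_const_nhds h
    (fun m => zero_le) (fun m => measure_mono ?_)
  intro ω hω
  simp only [mem_setOf_eq] at *
  rw [edist_dist, dist_zero_right]
  exact ENNReal.ofReal_le_ofReal (le_trans hω (le_abs_self _))

/-- no jump at a fixed positive time, expressed via the rational sup functional. -/
lemma no_jump
    (hDmeas : Measurable fun p : ℝ × Ω => D p.1 p.2)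
    (hpath : ∀ᵐ ω ∂P, StrictMonoOn (fun t => D t ω) (Set.Ici 0) ∧
      (∀ t : ℝ, 0 ≤ t → ContinuousWithinAt (fun u => D u ω) (Set.Ici t) t) ∧
      D 0 ω = 0 ∧ Filter.Tendsto (fun t => D t ω) Filter.atTop Filter.atTop)
    (hstat : ∀ t h : ℝ, 0 ≤ t → 0 ≤ h →
      ProbabilityTheory.IdentDistrib (fun ω => D (t + h) ω - D t ω) (fun ω => D h ω) P P)
    {v : ℝ} (hv : 0 < v) :
    ∀ᵐ ω ∂P, (⨆ q : ℚ, if 0 ≤ (q:ℝ) ∧ (q:ℝ) < v then ENNReal.ofReal (D q ω) else 0)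
      = ENNReal.ofReal (D v ω) := by
  set δ : ℕ → ℝ := fun m => v / (m + 2) with hδdef
  have hδpos : ∀ m, 0 < δ m := fun m => div_pos hv (by positivity)
  have hδlt : ∀ m, δ m < v := by
    intro m
    rw [hδdef]
    rw [div_lt_iff₀ (by positivity : (0:ℝ) < (m:ℝ) + 2)]
    nlinarith [hv, (Nat.cast_nonneg m : (0:ℝ) ≤ m)]
  have hδ0 : Tendsto δ atTop (𝓝 0) := by
    rw [hδdef]
    exact Tendsto.div_atTop tendsto_const_nhds
      (tendsto_atTop_add_const_right _ 2 tendsto_natCast_atTop_atTop)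
  -- for each positive rational ε, the event "gap always ≥ ε" is null
  have hkey : ∀ ε : ℚ, 0 < ε → P {ω | ∀ m, (ε:ℝ) ≤ D v ω - D (v - δ m) ω} = 0 := by
    intro ε hε
    have hεR : (0:ℝ) < (ε:ℝ) := by exact_mod_cast hε
    have hle : ∀ m, P {ω | ∀ m', (ε:ℝ) ≤ D v ω - D (v - δ m') ω}
        ≤ P {ω | (ε:ℝ) ≤ D (δ m) ω} := by
      intro m
      have hident := hstat (v - δ m) (δ m) (by linarith [hδlt m]) (hδpos m).le
      have : P {ω | (ε:ℝ) ≤ D v ω - D (v - δ m) ω} = P {ω | (ε:ℝ) ≤ D (δ m) ω} := by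
        have h1 : P {ω | (fun ω => D ((v - δ m) + δ m) ω - D (v - δ m) ω) ω ∈ Ici (ε:ℝ)}
            = P {ω | (fun ω => D (δ m) ω) ω ∈ Ici (ε:ℝ)} :=
          hident.measure_mem_eq measurableSet_Ici
        simpa [sub_add_cancel, mem_Ici] using h1
      rw [← this]
      exact measure_mono fun ω hω => hω m
    have htend := tendsto_incr_zero hDmeas hpath (fun m => (hδpos m).le) hδ0 hεR
    have := ge_of_tendsto' htend (fun m => hle m)
    exact le_antisymm this zero_le
  have hkey' : ∀ᵐ ω ∂P, ∀ ε : ℚ, 0 < ε → ∃ m, D v ω - D (v - δ m) ω < (ε:ℝ) := by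
    rw [ae_all_iff]
    intro ε
    by_cases hε : 0 < ε
    · have h0 := hkey ε hε
      rw [ae_iff]
      refine measure_mono_null ?_ h0
      intro ω hω
      simp only [mem_setOf_eq] at hω
      push_neg at hω
      exact fun m => hω.2 m
    · exact Eventually.of_forall fun ω h => absurd h hε
  filter_upwards [hpath, hkey'] with ω ⟨hmono, hrc, h0, htop⟩ hgap
  have hmono' := hmono.monotoneOn
  have hDv0 : 0 ≤ D v ω := by
    have h1 : (fun t => D t ω) 0 ≤ (fun t => D t ω) v :=
      hmono' self_mem_Ici (by simpa [mem_Ici] using hv.le) hv.le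
    simpa [h0] using h1
  refine le_antisymm ?_ ?_
  · refine iSup_le fun q => ?_
    split_ifs with hq
    · exact ENNReal.ofReal_le_ofReal (hmono' hq.1 hv.le hq.2.le)
    · exact zero_le
  · refine ENNReal.le_of_forall_pos_le_add fun ε' hε' _ => ?_
    obtain ⟨ε, hε1, hε2⟩ := exists_rat_btwn (show (0:ℝ) < (ε':ℝ) from hε')
    have hεQ : 0 < ε := by exact_mod_cast hε1
    obtain ⟨m, hm⟩ := hgap ε hεQ
    obtain ⟨q, hq1, hq2⟩ := exists_rat_btwn (sub_lt_self v (hδpos m))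
    have hq0 : (0:ℝ) ≤ (q:ℝ) := le_of_lt (lt_of_le_of_lt (by linarith [hδlt m]) hq1)
    have hDq : D v ω - (ε:ℝ) < D (q:ℝ) ω := by
      have : D (v - δ m) ω ≤ D (q:ℝ) ω :=
        hmono' (by simp [mem_Ici]; linarith [hδlt m]) (by simpa [mem_Ici] using hq0) hq1.le
      linarith
    have hterm : ENNReal.ofReal (D (q:ℝ) ω)
        ≤ ⨆ q : ℚ, if 0 ≤ (q:ℝ) ∧ (q:ℝ) < v then ENNReal.ofReal (D q ω) else 0 := by
      refine le_trans ?_ (le_iSup _ q)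
      rw [if_pos ⟨hq0, hq2⟩]
    calc ENNReal.ofReal (D v ω) ≤ ENNReal.ofReal ((D v ω - ε) + ε) := by
          rw [sub_add_cancel]
      _ ≤ ENNReal.ofReal (D v ω - ε) + ENNReal.ofReal (ε:ℝ) := ENNReal.ofReal_add_le
      _ ≤ ENNReal.ofReal (D (q:ℝ) ω) + ENNReal.ofReal (ε:ℝ) :=
          add_le_add (ENNReal.ofReal_le_ofReal hDq.le) le_rfl
      _ ≤ (⨆ q : ℚ, if 0 ≤ (q:ℝ) ∧ (q:ℝ) < v then ENNReal.ofReal (D q ω) else 0) + ε' :=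
          add_le_add hterm (by rw [← ENNReal.ofReal_coe_nnreal]
                               exact ENNReal.ofReal_le_ofReal hε2.le)


end
section


variable {Ω : Type*} [MeasurableSpace Ω] {P : Measure Ω} [IsProbabilityMeasure P] {D : ℝ → Ω → ℝ}


lemma einv_facts
    (hpath : ∀ᵐ ω ∂P, StrictMonoOn (fun t => D t ω) (Set.Ici 0) ∧
      (∀ t : ℝ, 0 ≤ t → ContinuousWithinAt (fun u => D u ω) (Set.Ici t) t) ∧
      D 0 ω = 0 ∧ Filter.Tendsto (fun t => D t ω) Filter.atTop Filter.atTop)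
    {t : ℝ} (ht : 0 ≤ t) :
    ∀ᵐ ω ∂P, 0 ≤ sInf {r : ℝ | 0 < r ∧ t < D r ω} ∧
      Esh t (fun u => D u ω) = ENNReal.ofReal (sInf {r : ℝ | 0 < r ∧ t < D r ω}) := by
  filter_upwards [hpath] with ω ⟨hmono, hrc, h0, htop⟩
  have hmono' := hmono.monotoneOn
  set S := {r : ℝ | 0 < r ∧ t < D r ω} with hS
  have hne : S.Nonempty := by
    obtain ⟨r, hr1, hr2⟩ := ((htop.eventually (eventually_gt_atTop t)).and
      (eventually_ge_atTop 1)).exists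
    exact ⟨r, lt_of_lt_of_le one_pos hr2, hr1⟩
  have hbdd : BddBelow S := ⟨0, fun r hr => hr.1.le⟩
  have hinf0 : 0 ≤ sInf S := le_csInf hne fun r hr => hr.1.le
  refine ⟨hinf0, le_antisymm ?_ ?_⟩
  · refine ENNReal.le_of_forall_pos_le_add fun ε' hε' _ => ?_
    have hε'R : (0:ℝ) < (ε':ℝ) := hε'
    obtain ⟨r, hrS, hrlt⟩ := exists_lt_of_csInf_lt hne
      (show sInf S < sInf S + (ε':ℝ)/2 by linarith)
    obtain ⟨q, hq1, hq2⟩ := exists_rat_btwn (show r < sInf S + (ε':ℝ) by linarith)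
    have hq0 : (0:ℝ) < (q:ℝ) := lt_trans hrS.1 hq1
    have hqD : t < D (q:ℝ) ω :=
      lt_of_lt_of_le hrS.2 (hmono' (le_of_lt hrS.1) (le_of_lt hq0) hq1.le)
    calc Esh t (fun u => D u ω) ≤ ENNReal.ofReal (q:ℝ) := by
          refine le_trans (iInf_le _ q) ?_
          rw [if_pos ⟨hq0, hqD⟩]
      _ ≤ ENNReal.ofReal (sInf S + (ε':ℝ)) := ENNReal.ofReal_le_ofReal hq2.le
      _ = ENNReal.ofReal (sInf S) + ENNReal.ofReal (ε':ℝ) := ENNReal.ofReal_add hinf0 hε'R.le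
      _ = ENNReal.ofReal (sInf S) + ε' := by rw [ENNReal.ofReal_coe_nnreal]
  · refine le_iInf fun q => ?_
    split_ifs with hq
    · exact ENNReal.ofReal_le_ofReal (csInf_le hbdd ⟨hq.1, hq.2⟩)
    · exact le_top

lemma einv_lt_iff
    (hDmeas : Measurable fun p : ℝ × Ω => D p.1 p.2)
    (hpath : ∀ᵐ ω ∂P, StrictMonoOn (fun t => D t ω) (Set.Ici 0) ∧
      (∀ t : ℝ, 0 ≤ t → ContinuousWithinAt (fun u => D u ω) (Set.Ici t) t) ∧
      D 0 ω = 0 ∧ Filter.Tendsto (fun t => D t ω) Filter.atTop Filter.atTop)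
    (hstat : ∀ t h : ℝ, 0 ≤ t → 0 ≤ h →
      ProbabilityTheory.IdentDistrib (fun ω => D (t + h) ω - D t ω) (fun ω => D h ω) P P)
    {t u : ℝ} (ht : 0 ≤ t) (hu : 0 < u)
    (no_jump : ∀ᵐ ω ∂P, (⨆ q : ℚ, if 0 ≤ (q:ℝ) ∧ (q:ℝ) < u then ENNReal.ofReal (D q ω) else 0)
      = ENNReal.ofReal (D u ω)) :
    ∀ᵐ ω ∂P, (sInf {r : ℝ | 0 < r ∧ t < D r ω} < u ↔ t < D u ω) := by
  filter_upwards [hpath, no_jump] with ω ⟨hmono, hrc, h0, htop⟩ hnj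
  have hmono' := hmono.monotoneOn
  set S := {r : ℝ | 0 < r ∧ t < D r ω} with hS
  have hne : S.Nonempty := by
    obtain ⟨r, hr1, hr2⟩ := ((htop.eventually (eventually_gt_atTop t)).and
      (eventually_ge_atTop 1)).exists
    exact ⟨r, lt_of_lt_of_le one_pos hr2, hr1⟩
  have hbdd : BddBelow S := ⟨0, fun r hr => hr.1.le⟩
  constructor
  · intro hlt
    obtain ⟨r, hrS, hru⟩ := exists_lt_of_csInf_lt hne hlt
    exact lt_of_lt_of_le hrS.2 (hmono' hrS.1.le (le_of_lt (lt_of_lt_of_le hrS.1 hru.le)) hru.le)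
  · intro hDu
    have h1 : ENNReal.ofReal t < ENNReal.ofReal (D u ω) := by
      rw [ENNReal.ofReal_lt_ofReal_iff (lt_of_le_of_lt ht hDu)]
      exact hDu
    rw [← hnj, lt_iSup_iff] at h1
    obtain ⟨q, hq⟩ := h1
    by_cases hcond : 0 ≤ (q:ℝ) ∧ (q:ℝ) < u
    · rw [if_pos hcond] at hq
      have hDq : t < D (q:ℝ) ω := by
        rwa [ENNReal.ofReal_lt_ofReal_iff_of_nonneg ht] at hq
      have hq0 : (0:ℝ) < (q:ℝ) := by
        rcases lt_or_eq_of_le hcond.1 with h | h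
        · exact h
        · exfalso
          have hq00 : D (q:ℝ) ω = 0 := by rw [← h]; exact h0
          rw [hq00] at hDq; linarith
      exact lt_of_le_of_lt (csInf_le hbdd ⟨hq0, hDq⟩) hcond.2
    · rw [if_neg hcond] at hq
      exact absurd hq (by simp)


end
section


lemma tau_eq_sup (f : ℝ → ℝ) (hmono : StrictMonoOn f (Set.Ici 0)) (h0 : f 0 = 0)
    {v τv : ℝ} (hv : 0 < v) (hlim : Tendsto f (𝓝[<] v) (𝓝 τv)) :
    0 ≤ τv ∧ (⨆ q : ℚ, if 0 ≤ (q:ℝ) ∧ (q:ℝ) < v then ENNReal.ofReal (f q) else 0)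
      = ENNReal.ofReal τv := by
  have hmono' := hmono.monotoneOn
  have step1 : ∀ x : ℝ, 0 ≤ x → x < v → f x ≤ τv := by
    intro x hx0 hxv
    by_contra hcon
    push_neg at hcon
    have ev : ∀ᶠ u in 𝓝[<] v, f u < f x := hlim.eventually_lt_const hcon
    have hIoo : Ioo x v ∈ 𝓝[<] v := Ioo_mem_nhdsLT_of_mem ⟨hxv, le_rfl⟩
    obtain ⟨u, hu1, hu2⟩ := (ev.and (eventually_of_mem hIoo fun u hu => hu)).exists
    have : f x < f u := hmono (by exact hx0) (by exact le_of_lt (lt_of_le_of_lt hx0 hu2.1))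
      hu2.1
    linarith
  have step2 : ∀ ε : ℝ, 0 < ε → ∃ q : ℚ, 0 ≤ (q:ℝ) ∧ (q:ℝ) < v ∧ τv - ε < f q := by
    intro ε hε
    have ev2 : ∀ᶠ u in 𝓝[<] v, τv - ε < f u :=
      hlim.eventually_const_lt (by linarith)
    have ev2' : {u : ℝ | τv - ε < f u} ∈ 𝓝[<] v := ev2
    rw [mem_nhdsLT_iff_exists_Ioo_subset] at ev2'
    obtain ⟨l, hl, hsub⟩ := ev2' 
    have hmax : max l (v/2) < v := by
      rcases max_cases l (v/2) with ⟨h1, _⟩ | ⟨h1, _⟩ <;> rw [h1]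
      · exact hl
      · linarith
    obtain ⟨q, hq1, hq2⟩ := exists_rat_btwn hmax
    have hq0 : (0:ℝ) ≤ (q:ℝ) := le_of_lt (lt_of_le_of_lt (by linarith : (0:ℝ) ≤ v/2)
      (lt_of_le_of_lt (le_max_right l (v/2)) hq1))
    refine ⟨q, hq0, hq2, hsub ⟨lt_of_le_of_lt (le_max_left l (v/2)) hq1, hq2⟩⟩
  have hτ0 : 0 ≤ τv := by
    have := step1 0 le_rfl hv
    rwa [h0] at this
  refine ⟨hτ0, le_antisymm ?_ ?_⟩
  · refine iSup_le fun q => ?_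
    split_ifs with hq
    · exact ENNReal.ofReal_le_ofReal (step1 q hq.1 hq.2)
    · exact zero_le
  · refine ENNReal.le_of_forall_pos_le_add fun ε' hε' _ => ?_
    have hε'R : (0:ℝ) < (ε':ℝ) := hε'
    obtain ⟨q, hq0, hqv, hqf⟩ := step2 (ε':ℝ) hε'R
    have hterm : ENNReal.ofReal (f q) ≤
        ⨆ q : ℚ, if 0 ≤ (q:ℝ) ∧ (q:ℝ) < v then ENNReal.ofReal (f q) else 0 := by
      refine le_trans ?_ (le_iSup _ q)
      rw [if_pos ⟨hq0, hqv⟩]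
    calc ENNReal.ofReal τv = ENNReal.ofReal ((τv - ε') + ε') := by rw [sub_add_cancel]
      _ ≤ ENNReal.ofReal (τv - ε') + ENNReal.ofReal (ε':ℝ) := ENNReal.ofReal_add_le
      _ ≤ ENNReal.ofReal (f q) + ENNReal.ofReal (ε':ℝ) :=
          add_le_add (ENNReal.ofReal_le_ofReal hqf.le) le_rfl
      _ ≤ (⨆ q : ℚ, if 0 ≤ (q:ℝ) ∧ (q:ℝ) < v then ENNReal.ofReal (f q) else 0) + ε' :=
          add_le_add hterm (by rw [ENNReal.ofReal_coe_nnreal])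


end
section


variable {Ω : Type*} [MeasurableSpace Ω] {P : Measure Ω} [IsProbabilityMeasure P]
variable {W : ℕ → Ω → ℝ}

lemma lintegral_prod_W (hWmeas : ∀ n, Measurable (W n))
    (hWindep : ProbabilityTheory.iIndepFun W P)
    (s : Finset ℕ) (g : ℕ → ℝ → ℝ≥0∞) (hg : ∀ k, Measurable (g k)) :
    ∫⁻ ω, ∏ k ∈ s, g k (W k ω) ∂P = ∏ k ∈ s, ∫⁻ ω, g k (W k ω) ∂P := by
  induction s using Finset.induction_on with
  | empty => simp
  | @insert a s ha ih =>
    have hdisj : Disjoint ({a} : Finset ℕ) s := Finset.disjoint_singleton_left.2 ha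
    have hbase := hWindep.indepFun_finset {a} s hdisj hWmeas
    set φ : (↥({a} : Finset ℕ) → ℝ) → ℝ≥0∞ :=
      fun z => g a (z ⟨a, Finset.mem_singleton_self a⟩) with hφ
    set ψ : (↥s → ℝ) → ℝ≥0∞ := fun z => ∏ i : ↥s, g (i : ℕ) (z i) with hψ
    have hφm : Measurable φ := (hg a).comp (measurable_pi_apply _)
    have hψm : Measurable ψ :=
      Finset.measurable_prod Finset.univ fun i _ => (hg i).comp (measurable_pi_apply i)
    have hindep := hbase.comp hφm hψm
    have hψeq : (ψ ∘ fun ω (i : ↥s) => W (i:ℕ) ω) = fun ω => ∏ k ∈ s, g k (W k ω) := by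
      funext ω
      simp only [Function.comp_apply, hψ]
      exact Finset.prod_coe_sort s (fun k => g k (W k ω))
    have hφeq : (φ ∘ fun ω (i : ↥({a} : Finset ℕ)) => W (i:ℕ) ω) = fun ω => g a (W a ω) := rfl
    rw [hψeq, hφeq] at hindep
    simp only [Finset.prod_insert ha]
    rw [← ih]
    have := ProbabilityTheory.lintegral_mul_eq_lintegral_mul_lintegral_of_indepFun
      ((hg a).comp (hWmeas a))
      (Finset.measurable_prod s fun k _ => (hg k).comp (hWmeas k)) hindep
    simpa using this

end
section


variable {Ω : Type*} [MeasurableSpace Ω] {P : Measure Ω} [IsProbabilityMeasure P]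
variable {W : ℕ → Ω → ℝ} {lam : ℝ}

lemma W_tail (hWexp : ∀ n, ∀ t : ℝ, 0 ≤ t → P {ω | t < W n ω} = ENNReal.ofReal (Real.exp (-(lam * t))))
    (n : ℕ) (a : ℝ) :
    P {ω | a < W n ω} = if 0 ≤ a then ENNReal.ofReal (Real.exp (-(lam * a))) else 1 := by
  split_ifs with h
  · exact hWexp n a h
  · refine le_antisymm prob_le_one ?_
    have h0 : P {ω | 0 < W n ω} = 1 := by
      have := hWexp n 0 le_rfl
      simpa using this
    rw [← h0]
    exact measure_mono fun ω hω => lt_trans (by linarith : a < 0) hω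

lemma lawW_eq (hWmeas : ∀ n, Measurable (W n))
    (hWexp : ∀ n, ∀ t : ℝ, 0 ≤ t → P {ω | t < W n ω} = ENNReal.ofReal (Real.exp (-(lam * t))))
    (n : ℕ) : P.map (W n) = P.map (W 0) := by
  have hgen : (inferInstance : MeasurableSpace ℝ) = .generateFrom (range Ioi) :=
    (BorelSpace.measurable_eq).trans (borel_eq_generateFrom_Ioi ℝ)
  refine ext_of_generate_finite (range Ioi) hgen isPiSystem_Ioi ?_ ?_
  · rintro s ⟨a, rfl⟩
    rw [Measure.map_apply (hWmeas n) measurableSet_Ioi,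
      Measure.map_apply (hWmeas 0) measurableSet_Ioi]
    have h1 : W n ⁻¹' Ioi a = {ω | a < W n ω} := rfl
    have h2 : W 0 ⁻¹' Ioi a = {ω | a < W 0 ω} := rfl
    rw [h1, h2, W_tail hWexp, W_tail hWexp]
  · rw [Measure.map_apply (hWmeas n) MeasurableSet.univ,
      Measure.map_apply (hWmeas 0) MeasurableSet.univ]
    simp

lemma W_pos_ae (hWmeas : ∀ n, Measurable (W n))
    (hWexp : ∀ n, ∀ t : ℝ, 0 ≤ t → P {ω | t < W n ω} = ENNReal.ofReal (Real.exp (-(lam * t))))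
    : ∀ᵐ ω ∂P, ∀ n, 0 < W n ω := by
  rw [ae_all_iff]
  intro n
  have h0 : P {ω | 0 < W n ω} = 1 := by simpa using hWexp n 0 le_rfl
  have hms : MeasurableSet {ω | 0 < W n ω} := measurableSet_lt measurable_const (hWmeas n)
  have : P {ω | 0 < W n ω}ᶜ = 0 := by
    rw [measure_compl hms (measure_ne_top _ _), h0]
    simp
  exact (MeasureTheory.ae_iff).2 (by simpa [compl_setOf] using this)


end

section
variable {Ω : Type*} [MeasurableSpace Ω] (P : Measure Ω) [IsProbabilityMeasure P]
variable (D : ℝ → Ω → ℝ) (W : ℕ → Ω → ℝ)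

def WV (ω : Ω) : ℕ → ℝ := fun i => W i ω
def DV (ω : Ω) : ℝ → ℝ := fun u => D u ω
noncomputable def FF (r u : ℝ) : ℝ≥0∞ := P {ω | r < D u ω}
def ZZ (w : ℕ → ℝ) : ℕ → Ω → ℝ
  | 0 => fun ω => D (vv w 0) ω
  | (k+1) => fun ω => D (vv w (k+1)) ω - D (vv w k) ω
noncomputable def Xm (k : ℕ) (ω : Ω) : ℝ := HH k (WV W ω, DV D ω)

variable {P D W}

lemma measurable_WV (hWmeas : ∀ n, Measurable (W n)) : Measurable (WV W) :=
  measurable_pi_lambda _ hWmeas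

lemma measurable_DV (hDmeas : Measurable fun p : ℝ × Ω => D p.1 p.2) : Measurable (DV D) :=
  measurable_pi_lambda _ fun u => measD hDmeas u

lemma measurable_FF (hDmeas : Measurable fun p : ℝ × Ω => D p.1 p.2) (r : ℝ) :
    Measurable (FF P D r) := by
  have hs : MeasurableSet {p : ℝ × Ω | r < D p.1 p.2} :=
    measurableSet_lt measurable_const hDmeas
  have := measurable_measure_prodMk_left (ν := P) hs
  exact this

lemma measurable_Xm (hDmeas : Measurable fun p : ℝ × Ω => D p.1 p.2)
    (hWmeas : ∀ n, Measurable (W n)) (k : ℕ) : Measurable (Xm D W k) :=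
  (measurable_HH k).comp ((measurable_WV hWmeas).prodMk (measurable_DV hDmeas))

lemma prod_attachFin {M : Type*} [CommMonoid M] (s : Finset ℕ) {n : ℕ}
    (h : ∀ m ∈ s, m < n) (c : ℕ → M) :
    ∏ i ∈ s.attachFin h, c (i : ℕ) = ∏ k ∈ s, c k := by
  refine Finset.prod_bij (fun (i : Fin n) _ => (i : ℕ)) ?_ ?_ ?_ ?_
  · intro i hi; exact (Finset.mem_attachFin h).1 hi
  · intro i hi j hj hij; exact Fin.val_injective hij
  · intro k hk; exact ⟨⟨k, h k hk⟩, (Finset.mem_attachFin h).2 hk, rfl⟩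
  · intro i hi; rfl

lemma ZZ_eq_incr (w : ℕ → ℝ) (i : ℕ) :
    (fun ω => D (vv w i) ω - if i = 0 then 0 else D (vv w (i - 1)) ω) = ZZ D w i := by
  cases i with
  | zero => funext ω; simp [ZZ]
  | succ k => funext ω; simp [ZZ]

lemma lemmaA
    (hDmeas : Measurable fun p : ℝ × Ω => D p.1 p.2)
    (hpath : ∀ᵐ ω ∂P, StrictMonoOn (fun t => D t ω) (Set.Ici 0) ∧
      (∀ t : ℝ, 0 ≤ t → ContinuousWithinAt (fun u => D u ω) (Set.Ici t) t) ∧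
      D 0 ω = 0 ∧ Filter.Tendsto (fun t => D t ω) Filter.atTop Filter.atTop)
    (hincr : ∀ (n : ℕ) (t : ℕ → ℝ), 0 ≤ t 0 → StrictMono t →
      ProbabilityTheory.iIndepFun
        (fun (i : Fin (n + 1)) ω =>
          D (t (i : ℕ)) ω - if (i : ℕ) = 0 then 0 else D (t ((i : ℕ) - 1)) ω) P)
    (hstat : ∀ t h : ℝ, 0 ≤ t → 0 ≤ h →
      ProbabilityTheory.IdentDistrib (fun ω => D (t + h) ω - D t ω) (fun ω => D h ω) P P)
    (hWmeas : ∀ n, Measurable (W n))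
    {lam : ℝ}
    (hWexp : ∀ n, ∀ t : ℝ, 0 ≤ t → P {ω | t < W n ω} = ENNReal.ofReal (Real.exp (-(lam * t))))
    (hWindep : ProbabilityTheory.iIndepFun W P)
    (hWD : ProbabilityTheory.IndepFun (fun ω n => W n ω) (fun ω t => D t ω) P)
    (s : Finset ℕ) (t : ℕ → ℝ) :
    P (⋂ k ∈ s, {ω | t k < Xm D W k ω}) = ∏ k ∈ s, ∫⁻ ω, FF P D (t k) (W k ω) ∂P := by
  have hWVm : Measurable (WV W) := measurable_WV hWmeas
  have hDVm : Measurable (DV D) := measurable_DV hDmeas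
  set μ := P.map (WV W) with hμ
  set ν := P.map (DV D) with hν
  have hjoint : P.map (fun ω => (WV W ω, DV D ω)) = μ.prod ν :=
    (ProbabilityTheory.indepFun_iff_map_prod_eq_prod_map_map hWVm.aemeasurable
      hDVm.aemeasurable).1 hWD
  set B : Set ((ℕ → ℝ) × (ℝ → ℝ)) := {p | ∀ k ∈ s, t k < HH k p} with hB
  have hBm : MeasurableSet B := by
    have hBeq : B = ⋂ k ∈ s, {p | t k < HH k p} := by ext p; simp [hB]
    rw [hBeq]
    exact MeasurableSet.biInter s.countable_toSet
      (fun k _ => measurableSet_lt measurable_const (measurable_HH k))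
  have h1 : (⋂ k ∈ s, {ω | t k < Xm D W k ω}) = (fun ω => (WV W ω, DV D ω)) ⁻¹' B := by
    ext ω; simp [Xm, hB]
  rw [h1, ← Measure.map_apply (hWVm.prodMk hDVm) hBm, hjoint, Measure.prod_apply hBm]
  have hμprob : IsProbabilityMeasure μ := Measure.isProbabilityMeasure_map hWVm.aemeasurable
  have hset : MeasurableSet {w : ℕ → ℝ | ∀ i, 0 < w i} := by
    have hseteq : {w : ℕ → ℝ | ∀ i, 0 < w i} = ⋂ i, {w | 0 < w i} := by ext; simp
    rw [hseteq]
    exact MeasurableSet.iInter fun i =>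
      measurableSet_lt measurable_const (measurable_pi_apply i)
  have hgood : ∀ᵐ w ∂μ, ∀ i, 0 < w i := by
    rw [hμ]
    refine (ae_map_iff hWVm.aemeasurable hset).2 ?_
    filter_upwards [W_pos_ae hWmeas hWexp] with ω h
    exact h
  have hinner : ∀ᵐ w ∂μ, ν (Prod.mk w ⁻¹' B) = ∏ k ∈ s, FF P D (t k) (w k) := by
    filter_upwards [hgood] with w hw
    -- (a) pull back to Ω
    have hsec : MeasurableSet (Prod.mk w ⁻¹' B) := hBm.preimage measurable_prodMk_left
    rw [hν, Measure.map_apply hDVm hsec]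
    -- (b) replace HH by ZZ a.e.
    have hnj : ∀ᵐ ω ∂P, ∀ k : ℕ,
        (⨆ q : ℚ, if 0 ≤ (q:ℝ) ∧ (q:ℝ) < vv w k then ENNReal.ofReal (D q ω) else 0)
          = ENNReal.ofReal (D (vv w k) ω) := by
      rw [ae_all_iff]
      exact fun k => no_jump hDmeas hpath hstat (vv_pos hw k)
    have hZeq : ∀ᵐ ω ∂P, ∀ k : ℕ, HH k (w, DV D ω) = ZZ D w k ω := by
      filter_upwards [hpath, hnj] with ω ⟨hmono, hrc, h0, htop⟩ hnjω
      have hmono' := hmono.monotoneOn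
      have hD0le : ∀ v : ℝ, 0 ≤ v → 0 ≤ D v ω := by
        intro v hv
        have h1 : (fun u => D u ω) 0 ≤ (fun u => D u ω) v :=
          hmono' self_mem_Ici (by simpa [mem_Ici] using hv) hv
        simpa [h0] using h1
      have hGG : ∀ k : ℕ, GG k (w, DV D ω) = ENNReal.ofReal (D (vv w k) ω) := by
        intro k
        have := hnjω k
        simpa [GG, DV] using this
      intro k
      cases k with
      | zero =>
        simp only [HH, hGG 0]
        rw [ENNReal.toReal_ofReal (hD0le _ (vv_pos hw 0).le)]
        rfl
      | succ k =>
        simp only [HH, hGG (k+1), hGG k]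
        rw [ENNReal.toReal_ofReal (hD0le _ (vv_pos hw (k+1)).le),
          ENNReal.toReal_ofReal (hD0le _ (vv_pos hw k).le)]
        rfl
    have hcongr : P (DV D ⁻¹' (Prod.mk w ⁻¹' B)) = P (⋂ k ∈ s, {ω | t k < ZZ D w k ω}) := by
      refine measure_congr ?_
      have : ∀ᵐ ω ∂P, (ω ∈ DV D ⁻¹' (Prod.mk w ⁻¹' B) ↔ ω ∈ ⋂ k ∈ s, {ω | t k < ZZ D w k ω}) := by
        filter_upwards [hZeq] with ω hZω
        simp only [mem_preimage, hB, mem_setOf_eq, mem_iInter]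
        constructor
        · intro h k hk; rw [← hZω k]; exact h k hk
        · intro h k hk; rw [hZω k]; exact h k hk
      exact eventuallyEq_set.2 this
    rw [hcongr]
    -- (c) independence of increments
    set n := s.sup id with hn
    have hlt : ∀ m ∈ s, m < n + 1 := fun m hm =>
      Nat.lt_succ_of_le (Finset.le_sup (f := id) hm)
    have ind := hincr n (vv w) (vv_pos hw 0).le (vv_strictMono hw)
    have hprod := ind.measure_inter_preimage_eq_mul (s.attachFin hlt)
      (sets := fun i : Fin (n+1) => Ioi (t (i : ℕ)))
      (fun i _ => measurableSet_Ioi)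
    have hsetseq : ∀ i : Fin (n + 1),
        ((fun ω => D (vv w (i : ℕ)) ω -
          if (i : ℕ) = 0 then 0 else D (vv w ((i : ℕ) - 1)) ω) ⁻¹' Ioi (t (i : ℕ)))
          = {ω | t (i : ℕ) < ZZ D w (i : ℕ) ω} := by
      intro i
      rw [ZZ_eq_incr]
      rfl
    have hIeq : (⋂ i ∈ s.attachFin hlt,
        ((fun ω => D (vv w (i : ℕ)) ω -
          if (i : ℕ) = 0 then 0 else D (vv w ((i : ℕ) - 1)) ω) ⁻¹' Ioi (t (i : ℕ))))
        = ⋂ k ∈ s, {ω | t k < ZZ D w k ω} := by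
      ext ω
      simp only [mem_iInter, Finset.mem_attachFin, hsetseq]
      constructor
      · intro h k hk
        exact h ⟨k, hlt k hk⟩ hk
      · intro h i hi
        exact h (i : ℕ) hi
    rw [hIeq] at hprod
    rw [hprod]
    have hPeq : ∀ i : Fin (n + 1),
        P ((fun ω => D (vv w (i : ℕ)) ω -
          if (i : ℕ) = 0 then 0 else D (vv w ((i : ℕ) - 1)) ω) ⁻¹' Ioi (t (i : ℕ)))
          = P {ω | t (i : ℕ) < ZZ D w (i : ℕ) ω} := fun i => by rw [hsetseq]
    rw [Finset.prod_congr rfl (fun i _ => hPeq i)]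
    rw [prod_attachFin s hlt (fun k => P {ω | t k < ZZ D w k ω})]
    -- (d) each factor via stationarity
    refine Finset.prod_congr rfl fun k _ => ?_
    cases k with
    | zero =>
      have hv0 : vv w 0 = w 0 := vv_zero w
      simp only [ZZ, hv0, FF]
    | succ k =>
      have hident := hstat (vv w k) (w (k+1)) (vv_pos hw k).le (hw (k+1)).le
      have h2 : P {ω | (fun ω => D (vv w k + w (k+1)) ω - D (vv w k) ω) ω ∈ Ioi (t (k+1))}
          = P {ω | (fun ω => D (w (k+1)) ω) ω ∈ Ioi (t (k+1))} :=
        hident.measure_mem_eq measurableSet_Ioi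
      have hv : vv w k + w (k+1) = vv w (k+1) := (vv_succ w k).symm
      rw [hv] at h2
      simpa [ZZ, FF, mem_Ioi] using h2
  rw [lintegral_congr_ae hinner]
  have hmf : Measurable fun w : ℕ → ℝ => ∏ k ∈ s, FF P D (t k) (w k) :=
    Finset.measurable_prod s fun k _ =>
      (measurable_FF hDmeas (t k)).comp (measurable_pi_apply k)
  rw [hμ, lintegral_map hmf hWVm]
  have := lintegral_prod_W hWmeas hWindep s (fun k => FF P D (t k))
    (fun k => measurable_FF hDmeas (t k))
  exact this

end

section
variable {Ω : Type*} [MeasurableSpace Ω] {P : Measure Ω} [IsProbabilityMeasure P]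
variable {D : ℝ → Ω → ℝ} {W : ℕ → Ω → ℝ} {lam : ℝ}

lemma tail_value
    (hDmeas : Measurable fun p : ℝ × Ω => D p.1 p.2)
    (hpath : ∀ᵐ ω ∂P, StrictMonoOn (fun t => D t ω) (Set.Ici 0) ∧
      (∀ t : ℝ, 0 ≤ t → ContinuousWithinAt (fun u => D u ω) (Set.Ici t) t) ∧
      D 0 ω = 0 ∧ Filter.Tendsto (fun t => D t ω) Filter.atTop Filter.atTop)
    (hstat : ∀ t h : ℝ, 0 ≤ t → 0 ≤ h →
      ProbabilityTheory.IdentDistrib (fun ω => D (t + h) ω - D t ω) (fun ω => D h ω) P P)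
    (hWmeas : ∀ n, Measurable (W n))
    (hWexp : ∀ n, ∀ t : ℝ, 0 ≤ t → P {ω | t < W n ω} = ENNReal.ofReal (Real.exp (-(lam * t))))
    {t : ℝ} (ht : 0 ≤ t) :
    ∫⁻ ω, FF P D t (W 0 ω) ∂P
      = ∫⁻ ω, ENNReal.ofReal (Real.exp (-(lam * sInf {r : ℝ | 0 < r ∧ t < D r ω}))) ∂P := by
  classical
  set Et : Ω → ℝ := fun ω => (Esh t (DV D ω)).toReal with hEt
  have hEtm : Measurable Et := (measurable_Esh t).comp (measurable_DV hDmeas) |>.ennreal_toReal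
  have hEtnn : ∀ ω, 0 ≤ Et ω := fun ω => ENNReal.toReal_nonneg
  have hfacts := einv_facts (P := P) (D := D) hpath ht
  have hEeq : ∀ᵐ ω ∂P, Et ω = sInf {r : ℝ | 0 < r ∧ t < D r ω} := by
    filter_upwards [hfacts] with ω ⟨h1, h2⟩
    show (Esh t (fun u => D u ω)).toReal = _
    rw [h2, ENNReal.toReal_ofReal h1]
  set lawE := P.map Et with hlawE
  set lawW := P.map (W 0) with hlawW
  have hlawEprob : IsProbabilityMeasure lawE := Measure.isProbabilityMeasure_map hEtm.aemeasurable
  have hlawWprob : IsProbabilityMeasure lawW := Measure.isProbabilityMeasure_map (hWmeas 0).aemeasurable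
  have hsm : MeasurableSet {p : ℝ × ℝ | p.1 < p.2} := measurableSet_lt measurable_fst measurable_snd
  -- first evaluation
  have hA1 : (lawE.prod lawW) {p : ℝ × ℝ | p.1 < p.2}
      = ∫⁻ ω, ENNReal.ofReal (Real.exp (-(lam * Et ω))) ∂P := by
    rw [Measure.prod_apply hsm]
    have hsec : ∀ e : ℝ, (Prod.mk e ⁻¹' {p : ℝ × ℝ | p.1 < p.2}) = Ioi e := by
      intro e; rfl
    have hg : Antitone (fun e => lawW (Ioi e)) := by
      intro e e' h
      exact measure_mono (fun u hu => lt_of_le_of_lt h hu)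
    calc ∫⁻ e, lawW (Prod.mk e ⁻¹' {p : ℝ × ℝ | p.1 < p.2}) ∂lawE
        = ∫⁻ e, lawW (Ioi e) ∂lawE := by
          refine lintegral_congr fun e => ?_; rw [hsec]
      _ = ∫⁻ ω, lawW (Ioi (Et ω)) ∂P := by
          rw [hlawE, lintegral_map hg.measurable hEtm]
      _ = ∫⁻ ω, ENNReal.ofReal (Real.exp (-(lam * Et ω))) ∂P := by
          refine lintegral_congr fun ω => ?_
          rw [hlawW, Measure.map_apply (hWmeas 0) measurableSet_Ioi]
          have : W 0 ⁻¹' Ioi (Et ω) = {ω' | Et ω < W 0 ω'} := rfl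
          rw [this, hWexp 0 (Et ω) (hEtnn ω)]
  -- second evaluation
  have hPER : ∀ u : ℝ, 0 < u → P {ω' | Et ω' < u} = FF P D t u := by
    intro u hu
    have hnj := no_jump (P := P) hDmeas hpath hstat hu
    have hiff := einv_lt_iff (P := P) hDmeas hpath hstat ht hu hnj
    refine measure_congr (eventuallyEq_set.2 ?_)
    filter_upwards [hEeq, hiff] with ω h1 h2
    show Et ω < u ↔ t < D u ω
    rw [h1]
    exact h2
  have hA2 : (lawE.prod lawW) {p : ℝ × ℝ | p.1 < p.2} = ∫⁻ ω, FF P D t (W 0 ω) ∂P := by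
    rw [Measure.prod_apply_symm hsm]
    have hsec : ∀ u : ℝ, ((fun e => (e, u)) ⁻¹' {p : ℝ × ℝ | p.1 < p.2}) = Iio u := by
      intro u; ext e; simp [mem_Iio]
    have hg : Monotone (fun u => lawE (Iio u)) := by
      intro u u' h
      exact measure_mono (fun e he => lt_of_lt_of_le he h)
    calc ∫⁻ u, lawE ((fun e => (e, u)) ⁻¹' {p : ℝ × ℝ | p.1 < p.2}) ∂lawW
        = ∫⁻ u, lawE (Iio u) ∂lawW := by
          refine lintegral_congr fun u => ?_; rw [hsec]
      _ = ∫⁻ ω, lawE (Iio (W 0 ω)) ∂P := by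
          rw [hlawW, lintegral_map hg.measurable (hWmeas 0)]
      _ = ∫⁻ ω, FF P D t (W 0 ω) ∂P := by
          refine lintegral_congr_ae ?_
          filter_upwards [W_pos_ae hWmeas hWexp] with ω hW
          rw [hlawE, Measure.map_apply hEtm measurableSet_Iio]
          have : Et ⁻¹' Iio (W 0 ω) = {ω' | Et ω' < W 0 ω} := rfl
          rw [this, hPER (W 0 ω) (hW 0)]
  rw [← hA2, hA1]
  refine lintegral_congr_ae ?_
  filter_upwards [hEeq] with ω h1
  rw [h1]

end

end Stmt7Aux


open Stmt7Aux


/-- Theorem 4.1: Let `D` be a strictly increasing subordinator (a.s. strictly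
increasing, right-continuous paths with `D 0 = 0`, `D t → ∞`, independent and stationary
increments), and let `(Wₙ)` be i.i.d. exponential(λ), independent of the whole process `D`.
Let `E(t) = inf {r > 0 : D r > t}` be the inverse process, `Vₙ = W₀ + ⋯ + Wₙ`,
`τₙ = D(Vₙ−)` the left limit of the path at `Vₙ`, `X₀ = τ₀`, `Xₙ₊₁ = τₙ₊₁ − τₙ`. Then the
`(Xₙ)` are i.i.d. with `P(Xₙ > t) = E[e^{−λ E(t)}]` for every `t ≥ 0`. -/
theorem stmt7 {Ω : Type*} [MeasurableSpace Ω] (P : MeasureTheory.Measure Ω)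
    [MeasureTheory.IsProbabilityMeasure P]
    (lam : ℝ) (hlam : 0 < lam)
    (D : ℝ → Ω → ℝ)
    (hDmeas : Measurable fun p : ℝ × Ω => D p.1 p.2)
    (hpath : ∀ᵐ ω ∂P, StrictMonoOn (fun t => D t ω) (Set.Ici 0) ∧
      (∀ t : ℝ, 0 ≤ t → ContinuousWithinAt (fun u => D u ω) (Set.Ici t) t) ∧
      D 0 ω = 0 ∧ Filter.Tendsto (fun t => D t ω) Filter.atTop Filter.atTop)
    (hincr : ∀ (n : ℕ) (t : ℕ → ℝ), 0 ≤ t 0 → StrictMono t →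
      ProbabilityTheory.iIndepFun
        (fun (i : Fin (n + 1)) ω =>
          D (t (i : ℕ)) ω - if (i : ℕ) = 0 then 0 else D (t ((i : ℕ) - 1)) ω) P)
    (hstat : ∀ t h : ℝ, 0 ≤ t → 0 ≤ h →
      ProbabilityTheory.IdentDistrib (fun ω => D (t + h) ω - D t ω) (fun ω => D h ω) P P)
    (W : ℕ → Ω → ℝ)
    (hWmeas : ∀ n, Measurable (W n))
    (hWexp : ∀ n, ∀ t : ℝ, 0 ≤ t → P {ω | t < W n ω} = ENNReal.ofReal (Real.exp (-(lam * t))))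
    (hWindep : ProbabilityTheory.iIndepFun W P)
    (hWD : ProbabilityTheory.IndepFun (fun ω n => W n ω) (fun ω t => D t ω) P)
    (Einv : ℝ → Ω → ℝ)
    (hEinv : ∀ t ω, Einv t ω = sInf {r : ℝ | 0 < r ∧ t < D r ω})
    (V : ℕ → Ω → ℝ) (hV : ∀ n ω, V n ω = ∑ i ∈ Finset.range (n + 1), W i ω)
    (τ : ℕ → Ω → ℝ)
    (hτ : ∀ n, ∀ᵐ ω ∂P,
      Filter.Tendsto (fun t => D t ω) (nhdsWithin (V n ω) (Set.Iio (V n ω))) (nhds (τ n ω)))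
    (X : ℕ → Ω → ℝ)
    (hX0 : ∀ ω, X 0 ω = τ 0 ω)
    (hXn : ∀ n ω, X (n + 1) ω = τ (n + 1) ω - τ n ω) :
    ProbabilityTheory.iIndepFun X P ∧
    ∀ n, ∀ t : ℝ, 0 ≤ t →
      P {ω | t < X n ω} = ENNReal.ofReal (∫ ω, Real.exp (-(lam * Einv t ω)) ∂P) := by
  classical
  -- identification of X with its measurable version Xm
  have hXX' : ∀ᵐ ω ∂P, ∀ k, X k ω = Xm D W k ω := by
    have hτ' : ∀ᵐ ω ∂P, ∀ n, Filter.Tendsto (fun t => D t ω)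
        (nhdsWithin (V n ω) (Set.Iio (V n ω))) (nhds (τ n ω)) := ae_all_iff.2 hτ
    filter_upwards [hpath, hτ', W_pos_ae hWmeas hWexp] with ω hω hτω hWω
    obtain ⟨hmono, hrc, h0, htop⟩ := hω
    have hVeq : ∀ k, V k ω = vv (WV W ω) k := by
      intro k; rw [hV]; rfl
    have htau : ∀ k, 0 ≤ τ k ω ∧ GG k (WV W ω, DV D ω) = ENNReal.ofReal (τ k ω) := by
      intro k
      have hVpos : 0 < V k ω := by
        rw [hVeq k]; exact vv_pos (fun i => hWω i) k
      have h := tau_eq_sup (fun u => D u ω) hmono h0 hVpos (hτω k)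
      refine ⟨h.1, ?_⟩
      have hGG : GG k (WV W ω, DV D ω)
          = ⨆ q : ℚ, if 0 ≤ (q:ℝ) ∧ (q:ℝ) < V k ω then ENNReal.ofReal (D q ω) else 0 := by
        rw [hVeq k]; rfl
      rw [hGG, h.2]
    intro k
    cases k with
    | zero =>
      rw [hX0]
      show τ 0 ω = HH 0 (WV W ω, DV D ω)
      simp only [HH, (htau 0).2, ENNReal.toReal_ofReal (htau 0).1]
    | succ k =>
      rw [hXn]
      show τ (k+1) ω - τ k ω = HH (k+1) (WV W ω, DV D ω)
      simp only [HH, (htau (k+1)).2, (htau k).2,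
        ENNReal.toReal_ofReal (htau (k+1)).1, ENNReal.toReal_ofReal (htau k).1]
  -- single events
  have hsingle : ∀ (k : ℕ) (r : ℝ),
      P {ω | r < Xm D W k ω} = ∫⁻ ω, FF P D r (W k ω) ∂P := by
    intro k r
    have := lemmaA hDmeas hpath hincr hstat hWmeas hWexp hWindep hWD {k} (fun _ => r)
    simpa using this
  -- independence of the measurable versions
  have hXmInd : ProbabilityTheory.iIndepFun (Xm D W) P := by
    have hgen : (inferInstance : MeasurableSpace ℝ) = .generateFrom (range Ioi) :=
      (BorelSpace.measurable_eq).trans (borel_eq_generateFrom_Ioi ℝ)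
    set psys : ℕ → Set (Set Ω) := fun i => (preimage (Xm D W i)) '' (range Ioi) with hpsys
    have hsets : ProbabilityTheory.iIndepSets psys P := by
      rw [ProbabilityTheory.iIndepSets_iff]
      intro S f' hf'
      have hex : ∀ i, i ∈ S → ∃ a : ℝ, f' i = Xm D W i ⁻¹' Ioi a := by
        intro i hi
        rcases hf' i hi with ⟨s', ⟨a, rfl⟩, h⟩
        exact ⟨a, h.symm⟩
      set t : ℕ → ℝ := fun i =>
        if h : ∃ a : ℝ, f' i = Xm D W i ⁻¹' Ioi a then h.choose else 0 with htdef
      have hfi : ∀ i ∈ S, f' i = {ω | t i < Xm D W i ω} := by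
        intro i hi
        have h := hex i hi
        have ht_i : t i = h.choose := dif_pos h
        rw [ht_i]
        exact h.choose_spec
      have h1 : (⋂ i ∈ S, f' i) = ⋂ i ∈ S, {ω | t i < Xm D W i ω} :=
        iInter₂_congr hfi
      rw [h1]
      have h2 : (∏ i ∈ S, P (f' i)) = ∏ i ∈ S, ∫⁻ ω, FF P D (t i) (W i ω) ∂P :=
        Finset.prod_congr rfl fun i hi => by rw [hfi i hi, hsingle i (t i)]
      rw [h2]
      exact lemmaA hDmeas hpath hincr hstat hWmeas hWexp hWindep hWD S t
    refine (ProbabilityTheory.iIndepFun_iff_iIndep _ _ _).2 ?_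
    refine ProbabilityTheory.iIndepSets.iIndep ?_ psys ?_ ?_ hsets
    · exact fun i => (measurable_Xm hDmeas hWmeas i).comap_le
    · exact fun i => isPiSystem_Ioi.comap _
    · intro i
      rw [hpsys]
      conv_lhs => rw [show Real.measurableSpace = _ from hgen]
      exact MeasurableSpace.comap_generateFrom
  constructor
  · -- transfer independence to X
    rw [ProbabilityTheory.iIndepFun_iff_measure_inter_preimage_eq_mul]
    intro S sets hsets
    have hXmInd' := ProbabilityTheory.iIndepFun_iff_measure_inter_preimage_eq_mul.1 hXmInd
      S hsets
    have h1 : P (⋂ i ∈ S, X i ⁻¹' sets i) = P (⋂ i ∈ S, Xm D W i ⁻¹' sets i) := by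
      refine measure_congr (eventuallyEq_set.2 ?_)
      filter_upwards [hXX'] with ω hω
      simp only [mem_iInter, mem_preimage]
      constructor
      · intro h i hi; rw [← hω i]; exact h i hi
      · intro h i hi; rw [hω i]; exact h i hi
    have h2 : ∀ i, P (X i ⁻¹' sets i) = P (Xm D W i ⁻¹' sets i) := by
      intro i
      refine measure_congr (eventuallyEq_set.2 ?_)
      filter_upwards [hXX'] with ω hω
      simp only [mem_preimage]
      rw [hω i]
    rw [h1, hXmInd']
    exact Finset.prod_congr rfl fun i _ => (h2 i).symm
  · -- the tail formula
    intro n t ht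
    have h1 : P {ω | t < X n ω} = P {ω | t < Xm D W n ω} := by
      refine measure_congr (eventuallyEq_set.2 ?_)
      filter_upwards [hXX'] with ω hω
      show t < X n ω ↔ t < Xm D W n ω
      rw [hω n]
    have h2 : ∫⁻ ω, FF P D t (W n ω) ∂P = ∫⁻ ω, FF P D t (W 0 ω) ∂P := by
      rw [← lintegral_map (measurable_FF hDmeas t) (hWmeas n),
        lawW_eq hWmeas hWexp n,
        lintegral_map (measurable_FF hDmeas t) (hWmeas 0)]
    have h3 := tail_value (P := P) hDmeas hpath hstat hWmeas hWexp ht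
    have h4 : ∫⁻ ω, ENNReal.ofReal (Real.exp (-(lam * sInf {r : ℝ | 0 < r ∧ t < D r ω}))) ∂P
        = ∫⁻ ω, ENNReal.ofReal (Real.exp (-(lam * Einv t ω))) ∂P := by
      refine lintegral_congr fun ω => ?_
      rw [hEinv t ω]
    -- integrability
    have hfacts := einv_facts (P := P) (D := D) hpath ht
    have hEnn : ∀ᵐ ω ∂P, 0 ≤ Einv t ω := by
      filter_upwards [hfacts] with ω hω
      rw [hEinv t ω]; exact hω.1
    have haes : AEStronglyMeasurable (fun ω => Real.exp (-(lam * Einv t ω))) P := by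
      have hm : Measurable fun ω => Real.exp (-(lam * (Esh t (DV D ω)).toReal)) := by
        have : Measurable fun ω => (Esh t (DV D ω)).toReal :=
          ((measurable_Esh t).comp (measurable_DV hDmeas)).ennreal_toReal
        exact (Real.measurable_exp.comp ((this.const_mul lam).neg))
      refine hm.aestronglyMeasurable.congr ?_
      filter_upwards [hfacts] with ω hω
      have : (Esh t (fun u => D u ω)).toReal = sInf {r : ℝ | 0 < r ∧ t < D r ω} := by
        rw [hω.2, ENNReal.toReal_ofReal hω.1]
      show Real.exp (-(lam * (Esh t (DV D ω)).toReal)) = Real.exp (-(lam * Einv t ω))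
      rw [hEinv t ω]
      exact congrArg Real.exp (by rw [show (Esh t (DV D ω)).toReal = _ from this])
    have hbd : ∀ᵐ ω ∂P, ‖Real.exp (-(lam * Einv t ω))‖ ≤ 1 := by
      filter_upwards [hEnn] with ω hω
      rw [Real.norm_eq_abs, Real.abs_exp, ← Real.exp_zero]
      exact Real.exp_le_exp.2 (by nlinarith)
    have hint : Integrable (fun ω => Real.exp (-(lam * Einv t ω))) P :=
      Integrable.mono' (integrable_const 1) haes hbd
    have h5 : ENNReal.ofReal (∫ ω, Real.exp (-(lam * Einv t ω)) ∂P)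
        = ∫⁻ ω, ENNReal.ofReal (Real.exp (-(lam * Einv t ω))) ∂P :=
      ofReal_integral_eq_lintegral_ofReal hint
        (ae_of_all _ fun ω => (Real.exp_pos _).le)
    rw [h1, hsingle n t, h2, h3, h4, h5]
end

section
/- Let λ > 0, t > 0 and k ∈ ℕ. Then the binomial probability C(⌊λt/p⌋, k) · p^k · (1 − p)^{⌊λt/p⌋ − k} converges to the Poisson probability e^{−λt} (λt)^k / k! as p → 0⁺. -/
open Set Filter Topology Real

/-- For `λ > 0`, `t > 0` and `k ∈ ℕ`, the binomial probability
`C(⌊λt/p⌋, k) p^k (1−p)^{⌊λt/p⌋−k}` converges to the Poisson probability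
`e^{−λt} (λt)^k / k!` as `p → 0⁺`. -/
theorem stmt9 (lam t : ℝ) (k : ℕ) (hlam : 0 < lam) (ht : 0 < t) :
    Filter.Tendsto
      (fun p : ℝ =>
        (Nat.choose ⌊lam * t / p⌋₊ k : ℝ) * p ^ k * (1 - p) ^ (⌊lam * t / p⌋₊ - k))
      (nhdsWithin 0 (Set.Ioi 0))
      (nhds (Real.exp (-(lam * t)) * (lam * t) ^ k / (Nat.factorial k : ℝ))) := by
  set c := lam * t with hc
  have hcpos : 0 < c := mul_pos hlam ht
  set n : ℝ → ℕ := fun p => ⌊c / p⌋₊ with hn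
  -- id tendsto 0 within
  have hid : Tendsto (fun p : ℝ => p) (𝓝[>] (0:ℝ)) (𝓝 0) :=
    tendsto_id.mono_left nhdsWithin_le_nhds
  -- n p * p → c
  have hnp : Tendsto (fun p : ℝ => (n p : ℝ) * p) (𝓝[>] (0:ℝ)) (𝓝 c) := by
    apply tendsto_of_tendsto_of_tendsto_of_le_of_le'
      (g := fun p : ℝ => c - p) (h := fun _ : ℝ => c)
    · simpa using tendsto_const_nhds.sub hid
    · exact tendsto_const_nhds
    · filter_upwards [self_mem_nhdsWithin] with p hp
      have hp : (0:ℝ) < p := hp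
      have h1 : c / p < (n p : ℝ) + 1 := Nat.lt_floor_add_one _
      have := (div_lt_iff₀ hp).1 h1
      nlinarith
    · filter_upwards [self_mem_nhdsWithin] with p hp
      have hp : (0:ℝ) < p := hp
      have h1 : (n p : ℝ) ≤ c / p := Nat.floor_le (le_of_lt (div_pos hcpos hp))
      calc (n p : ℝ) * p ≤ (c / p) * p := by nlinarith
        _ = c := by field_simp
  -- n p → ∞
  have hnat : Tendsto n (𝓝[>] (0:ℝ)) atTop := by
    have h1 : Tendsto (fun p : ℝ => c / p) (𝓝[>] (0:ℝ)) atTop := by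
      simpa [div_eq_mul_inv] using tendsto_inv_nhdsGT_zero.const_mul_atTop hcpos
    exact tendsto_nat_floor_atTop.comp h1
  have hk : ∀ᶠ p in 𝓝[>] (0:ℝ), k ≤ n p := hnat.eventually_ge_atTop k
  have hsmall : ∀ᶠ p in 𝓝[>] (0:ℝ), p < 1 := by
    filter_upwards [Ioo_mem_nhdsGT_of_mem (by norm_num : (0:ℝ) ∈ Ico 0 1)] with p hp
    exact hp.2
  -- log(1-p)/p → -1
  have hslope : Tendsto (fun p : ℝ => Real.log (1 - p) / p) (𝓝[>] (0:ℝ)) (𝓝 (-1)) := by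
    have hd : HasDerivAt (fun p : ℝ => Real.log (1 - p)) (-1) 0 := by
      have h1 : HasDerivAt (fun p : ℝ => 1 - p) (-1) 0 := by
        simpa using (hasDerivAt_id (0:ℝ)).const_sub 1
      have h2 := (Real.hasDerivAt_log (by norm_num : (1:ℝ) - 0 ≠ 0)).comp 0 h1
      simpa [Function.comp_def] using h2
    have := hasDerivAt_iff_tendsto_slope.1 hd
    have h2 : Tendsto (slope (fun p : ℝ => Real.log (1 - p)) 0) (𝓝[>] (0:ℝ)) (𝓝 (-1)) :=
      this.mono_left (nhdsWithin_mono _ (fun x hx => ne_of_gt hx))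
    refine h2.congr fun p => ?_
    simp [slope, div_eq_inv_mul]
  -- log(1-p) → 0
  have hlog0 : Tendsto (fun p : ℝ => Real.log (1 - p)) (𝓝[>] (0:ℝ)) (𝓝 0) := by
    have : ContinuousAt (fun p : ℝ => Real.log (1 - p)) 0 :=
      (Real.continuousAt_log (by norm_num)).comp (by fun_prop)
    simpa using this.continuousWithinAt.tendsto
  -- limit of the exponent
  have hexpo : Tendsto (fun p : ℝ => ((n p : ℝ) - k) * Real.log (1 - p))
      (𝓝[>] (0:ℝ)) (𝓝 (-c)) := by
    have h1 : Tendsto (fun p : ℝ => (n p : ℝ) * p * (Real.log (1 - p) / p)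
        - k * Real.log (1 - p)) (𝓝[>] (0:ℝ)) (𝓝 (c * (-1) - k * 0)) :=
      (hnp.mul hslope).sub (tendsto_const_nhds.mul hlog0)
    have h2 : Tendsto (fun p : ℝ => (n p : ℝ) * p * (Real.log (1 - p) / p)
        - k * Real.log (1 - p)) (𝓝[>] (0:ℝ)) (𝓝 (-c)) := by
      simpa using h1
    refine h2.congr' ?_
    filter_upwards [self_mem_nhdsWithin] with p hp
    have hp : (0:ℝ) < p := hp
    field_simp
  -- limit of the exp factor
  have hexp : Tendsto (fun p : ℝ => Real.exp (((n p : ℝ) - k) * Real.log (1 - p)))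
      (𝓝[>] (0:ℝ)) (𝓝 (Real.exp (-c))) := (Real.continuous_exp.tendsto _).comp hexpo
  -- limit of the product part
  have hprod : Tendsto (fun p : ℝ => ∏ i ∈ Finset.range k, (((n p : ℝ) - i) * p))
      (𝓝[>] (0:ℝ)) (𝓝 (c ^ k)) := by
    have h1 : ∀ i ∈ Finset.range k, Tendsto (fun p : ℝ => ((n p : ℝ) - i) * p)
        (𝓝[>] (0:ℝ)) (𝓝 c) := by
      intro i _
      have : Tendsto (fun p : ℝ => (n p : ℝ) * p - i * p) (𝓝[>] (0:ℝ)) (𝓝 (c - (i:ℝ) * 0)) :=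
        hnp.sub (tendsto_const_nhds.mul hid)
      have h2 : Tendsto (fun p : ℝ => (n p : ℝ) * p - i * p) (𝓝[>] (0:ℝ)) (𝓝 c) := by
        simpa using this
      exact h2.congr fun p => by ring
    have := tendsto_finset_prod (Finset.range k) h1
    simpa [Finset.prod_const] using this
  -- combined limit
  have hmain : Tendsto (fun p : ℝ =>
      (∏ i ∈ Finset.range k, (((n p : ℝ) - i) * p)) / (Nat.factorial k : ℝ)
        * Real.exp (((n p : ℝ) - k) * Real.log (1 - p)))
      (𝓝[>] (0:ℝ)) (𝓝 (Real.exp (-c) * c ^ k / (Nat.factorial k : ℝ))) := by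
    have := (hprod.div_const (Nat.factorial k : ℝ)).mul hexp
    convert this using 2
    ring
  refine hmain.congr' ?_
  filter_upwards [hk, hsmall, self_mem_nhdsWithin] with p hkp hp1 hp0
  have hp0 : (0:ℝ) < p := hp0
  have h1p : (0:ℝ) < 1 - p := by linarith
  -- rewrite choose via descFactorial
  have hdesc : ((n p).choose k : ℝ) =
      (∏ i ∈ Finset.range k, ((n p : ℝ) - i)) / (Nat.factorial k : ℝ) := by
    have h1 : ((n p).descFactorial k : ℝ) = (Nat.factorial k : ℝ) * ((n p).choose k : ℝ) := by
      exact_mod_cast congrArg (Nat.cast : ℕ → ℝ) (Nat.descFactorial_eq_factorial_mul_choose _ _)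
    have h2 : ((n p).descFactorial k : ℝ) = ∏ i ∈ Finset.range k, ((n p : ℝ) - i) := by
      rw [Nat.descFactorial_eq_prod_range, Nat.cast_prod]
      refine Finset.prod_congr rfl fun i hi => ?_
      have : i ≤ n p := le_trans (le_of_lt (Finset.mem_range.1 hi)) hkp
      push_cast [Nat.cast_sub this]
      ring
    rw [← h2, h1]
    field_simp
  have hpow : ((1:ℝ) - p) ^ (n p - k) = Real.exp (((n p : ℝ) - k) * Real.log (1 - p)) := by
    rw [← Real.exp_log h1p, ← Real.exp_nat_mul, Real.exp_log h1p, Nat.cast_sub hkp]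
  rw [hdesc, hpow, Finset.prod_mul_distrib, Finset.prod_const, Finset.card_range]
  ring
end

section
/- Let ν > 0, γ > 0, δ > 0, ω ∈ ℝ, and let s > 0 satisfy |ω| < s^ν. Then ∫₀^∞ e^{−st} t^{γ−1} E^δ_{ν,γ}(ω t^ν) dt = s^{νδ−γ} / (s^ν − ω)^δ, where E^δ_{ν,γ}(z) = ∑_{r=0}^∞ (Γ(δ+r)/Γ(δ)) · z^r / (r! Γ(νr + γ)); in particular the integrand is absolutely integrable on (0,∞). -/
open Set Filter Topology MeasureTheory Real
open scoped ENNReal NNReal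

/-- The generalized (Prabhakar) Mittag-Leffler function
`E^δ_{ν,γ}(z) = ∑_{r=0}^∞ (Γ(δ+r)/Γ(δ)) z^r / (r! Γ(νr + γ))`. -/
noncomputable def prabhakarML (ν γ δ z : ℝ) : ℝ :=
  ∑' r : ℕ, (Real.Gamma (δ + r) / Real.Gamma δ) * z ^ r /
    ((Nat.factorial r : ℝ) * Real.Gamma (ν * r + γ))

noncomputable def binomCoef (δ : ℝ) (r : ℕ) : ℝ :=
  Real.Gamma (δ + r) / (Real.Gamma δ * r.factorial)

lemma binomCoef_pos {δ : ℝ} (hδ : 0 < δ) (r : ℕ) : 0 < binomCoef δ r := by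
  have h1 : (0:ℝ) < δ + r := by positivity
  have h2 : (0:ℝ) < Real.Gamma (δ + r) := Real.Gamma_pos_of_pos h1
  have h3 : (0:ℝ) < Real.Gamma δ := Real.Gamma_pos_of_pos hδ
  have h4 : (0:ℝ) < r.factorial := by exact_mod_cast r.factorial_pos
  unfold binomCoef; positivity

lemma binomCoef_zero {δ : ℝ} (hδ : 0 < δ) : binomCoef δ 0 = 1 := by
  simp [binomCoef, div_self (Real.Gamma_pos_of_pos hδ).ne']

lemma binomCoef_succ {δ : ℝ} (hδ : 0 < δ) (r : ℕ) :
    binomCoef δ (r + 1) = binomCoef δ r * (δ + r) / (r + 1) := by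
  have h1 : δ + r ≠ 0 := by positivity
  have h2 : Real.Gamma (δ + ((r:ℝ) + 1)) = (δ + r) * Real.Gamma (δ + r) := by
    rw [show δ + ((r:ℝ) + 1) = (δ + r) + 1 by ring, Real.Gamma_add_one h1]
  have h3 : ((r+1).factorial : ℝ) = (r + 1) * r.factorial := by
    rw [Nat.factorial_succ]; push_cast; ring
  have h4 : Real.Gamma δ ≠ 0 := (Real.Gamma_pos_of_pos hδ).ne'
  have h5 : (r.factorial : ℝ) ≠ 0 := by exact_mod_cast r.factorial_ne_zero
  have h6 : (r : ℝ) + 1 ≠ 0 := by positivity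
  unfold binomCoef
  push_cast
  rw [h2, h3]
  field_simp

lemma ratio_tendsto (c b : ℝ) :
    Tendsto (fun r : ℕ => (c / r + 1) * b) atTop (𝓝 b) := by
  have := ((tendsto_const_div_atTop_nhds_zero_nat c).add_const 1).mul_const b
  simpa using this

lemma summable_deriv_aux {δ b : ℝ} (hδ : 0 < δ) (hb : 0 < b) (hb1 : b < 1) :
    Summable (fun r : ℕ => binomCoef δ r * r * b ^ (r - 1)) := by
  apply summable_of_ratio_test_tendsto_lt_one hb1
  · filter_upwards [eventually_ge_atTop 1] with r hr
    have h1 := binomCoef_pos hδ r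
    have h2 : (0:ℝ) < r := by exact_mod_cast hr
    positivity
  · have key : ∀ᶠ r : ℕ in atTop,
        ‖binomCoef δ (r+1) * ((r+1:ℕ):ℝ) * b ^ (r+1-1)‖ / ‖binomCoef δ r * r * b ^ (r-1)‖
          = (δ / r + 1) * b := by
      filter_upwards [eventually_ge_atTop 1] with r hr
      have h1 := binomCoef_pos hδ r
      have h2 : (0:ℝ) < r := by exact_mod_cast hr
      have h3 : b ^ (r - 1) > 0 := by positivity
      obtain ⟨k, rfl⟩ : ∃ k, r = k + 1 := ⟨r - 1, by omega⟩
      rw [binomCoef_succ hδ]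
      have h6 : ((k:ℝ) + 1) ≠ 0 := by positivity
      rw [norm_of_nonneg (by positivity), norm_of_nonneg (by positivity)]
      simp only [Nat.add_sub_cancel]
      rw [pow_succ]
      push_cast
      field_simp
    exact Tendsto.congr' (key.mono fun _ h => h.symm) (ratio_tendsto δ b)

lemma summable_pow {δ x : ℝ} (hδ : 0 < δ) (hx : |x| < 1) :
    Summable (fun r : ℕ => binomCoef δ r * x ^ r) := by
  rcases eq_or_ne x 0 with rfl | hx0
  · apply summable_of_ne_finset_zero (s := {0})
    intro r hr
    simp only [Finset.mem_singleton] at hr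
    simp [zero_pow hr]
  · apply summable_of_ratio_test_tendsto_lt_one hx
    · filter_upwards with r
      have h1 := binomCoef_pos hδ r
      have := pow_ne_zero r hx0
      positivity
    · have key : ∀ r : ℕ,
          ‖binomCoef δ (r+1) * x ^ (r+1)‖ / ‖binomCoef δ r * x ^ r‖
            = ((δ - 1) / (r + 1) + 1) * |x| := by
        intro r
        have h1 := binomCoef_pos hδ r
        have h2 := binomCoef_pos hδ (r + 1)
        have h6 : ((r:ℝ) + 1) ≠ 0 := by positivity
        have h7 : |x| ≠ 0 := abs_ne_zero.2 hx0
        rw [binomCoef_succ hδ]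
        rw [norm_mul, norm_mul, norm_pow, norm_pow, Real.norm_eq_abs, Real.norm_eq_abs,
          Real.norm_eq_abs, abs_of_pos h1, abs_of_pos (by positivity : (0:ℝ) < binomCoef δ r * (δ + r) / (r+1)),
          pow_succ]
        field_simp
        ring
      have h8 : Tendsto (fun r : ℕ => ((δ-1) / (r+1) + 1) * |x|) atTop (𝓝 (|x|)) := by
        refine Tendsto.congr (fun r => ?_)
          ((ratio_tendsto (δ - 1) |x|).comp (tendsto_add_atTop_nat 1))
        show ((δ-1) / ((r+1:ℕ):ℝ) + 1) * |x| = _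
        push_cast
        ring
      exact Tendsto.congr (fun r => (key r).symm) h8

noncomputable def fML (δ x : ℝ) : ℝ := ∑' r : ℕ, binomCoef δ r * x ^ r
noncomputable def DML (δ x : ℝ) : ℝ := ∑' r : ℕ, binomCoef δ r * r * x ^ (r - 1)

lemma summable_at_zero (δ : ℝ) : Summable (fun r : ℕ => binomCoef δ r * (0:ℝ) ^ r) := by
  apply summable_of_ne_finset_zero (s := {0})
  intro r hr
  simp only [Finset.mem_singleton] at hr
  simp [zero_pow hr]

lemma summable_deriv {δ x : ℝ} (hδ : 0 < δ) (hx : |x| < 1) :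
    Summable (fun r : ℕ => binomCoef δ r * r * x ^ (r - 1)) := by
  set b := (1 + |x|) / 2 with hb
  have hb0 : 0 < b := by positivity
  have hb1 : b < 1 := by rw [hb]; linarith
  have hxb : |x| ≤ b := by rw [hb]; linarith [abs_nonneg x]
  refine Summable.of_norm_bounded (summable_deriv_aux hδ hb0 hb1) fun r => ?_
  have h1 := binomCoef_pos hδ r
  rw [norm_mul, norm_mul, norm_pow, Real.norm_eq_abs, Real.norm_eq_abs, Real.norm_eq_abs,
    abs_of_pos h1, Nat.abs_cast]
  gcongr


lemma hasDerivAt_fML {δ b x : ℝ} (hδ : 0 < δ) (hb0 : 0 < b) (hb1 : b < 1)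
    (hx : x ∈ Ioo (-b) b) : HasDerivAt (fML δ) (DML δ x) x := by
  have key : HasDerivAt (fun y : ℝ => ∑' r : ℕ, binomCoef δ r * y ^ r)
      (∑' r : ℕ, binomCoef δ r * r * x ^ (r - 1)) x := by
    refine hasDerivAt_tsum_of_isPreconnected
      (g := fun (r : ℕ) (y : ℝ) => binomCoef δ r * y ^ r)
      (g' := fun (r : ℕ) (y : ℝ) => binomCoef δ r * r * y ^ (r - 1))
      (summable_deriv_aux hδ hb0 hb1) isOpen_Ioo
      (convex_Ioo (-b) b).isPreconnected (fun r y _ => ?_) (fun r y hy => ?_)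
      (by constructor <;> [linarith; linarith] : (0:ℝ) ∈ Ioo (-b) b)
      (summable_at_zero δ) hx
    · simpa [mul_assoc] using (hasDerivAt_pow r y).const_mul (binomCoef δ r)
    · have h1 := binomCoef_pos hδ r
      have hy' : |y| ≤ b := by rw [abs_le]; exact ⟨hy.1.le, hy.2.le⟩
      rw [norm_mul, norm_mul, norm_pow, Real.norm_eq_abs, Real.norm_eq_abs, Real.norm_eq_abs,
        abs_of_pos h1, Nat.abs_cast]
      gcongr
  exact key


lemma ode_fML {δ x : ℝ} (hδ : 0 < δ) (hx : |x| < 1) :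
    (1 - x) * DML δ x = δ * fML δ x := by
  have S1 : Summable (fun r : ℕ => binomCoef δ r * r * x ^ (r - 1)) := summable_deriv hδ hx
  have S2 : Summable (fun r : ℕ => binomCoef δ r * (δ + r) * x ^ r) := by
    have := (summable_nat_add_iff 1).2 S1
    refine this.congr fun r => ?_
    simp only [Nat.add_sub_cancel]
    rw [binomCoef_succ hδ]
    have h6 : ((r:ℝ) + 1) ≠ 0 := by positivity
    push_cast
    field_simp
  have S3 : Summable (fun r : ℕ => binomCoef δ r * r * x ^ r) := by
    refine Summable.congr (f := fun r : ℕ => x * (binomCoef δ r * r * x ^ (r - 1)))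
      (S1.mul_left x) fun r => ?_
    cases r with
    | zero => simp
    | succ k =>
      simp only [Nat.add_sub_cancel]
      push_cast
      rw [pow_succ]
      ring
  have hshift : DML δ x = ∑' r : ℕ, binomCoef δ r * (δ + r) * x ^ r := by
    rw [DML, S1.tsum_eq_zero_add]
    simp only [Nat.cast_zero, mul_zero, zero_mul, zero_add, Nat.add_sub_cancel]
    refine tsum_congr fun r => ?_
    rw [binomCoef_succ hδ]
    have h6 : ((r:ℝ) + 1) ≠ 0 := by positivity
    push_cast
    field_simp
  have hxD : x * DML δ x = ∑' r : ℕ, binomCoef δ r * r * x ^ r := by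
    rw [DML, ← tsum_mul_left]
    refine tsum_congr fun r => ?_
    cases r with
    | zero => simp
    | succ k =>
      simp only [Nat.add_sub_cancel]
      push_cast
      rw [pow_succ]
      ring
  have : (1 - x) * DML δ x = DML δ x - x * DML δ x := by ring
  rw [this, hxD, hshift, ← S2.tsum_sub S3, fML, ← tsum_mul_left]
  refine tsum_congr fun r => ?_
  ring

lemma hasSum_binomial {δ x : ℝ} (hδ : 0 < δ) (hx : |x| < 1) :
    HasSum (fun r : ℕ => binomCoef δ r * x ^ r) ((1 - x) ^ (-δ)) := by
  set b := (1 + |x|) / 2 with hb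
  have hb0 : 0 < b := by positivity
  have hb1 : b < 1 := by rw [hb]; linarith
  have hxb : |x| < b := by rw [hb]; linarith [abs_nonneg x]
  set g : ℝ → ℝ := fun y => (1 - y) ^ δ * fML δ y with hg
  have hderiv : ∀ y ∈ Ioo (-b) b, HasDerivAt g 0 y := by
    intro y hy
    have hy1 : |y| < 1 := lt_trans (abs_lt.2 hy) hb1
    have h1y : 0 < 1 - y := by have := (abs_lt.1 hy1).2; linarith
    have hf := hasDerivAt_fML hδ hb0 hb1 hy
    have hpow : HasDerivAt (fun z : ℝ => (1 - z) ^ δ)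
        ((-1) * δ * (1 - y) ^ (δ - 1)) y := by
      have hbase : HasDerivAt (fun z : ℝ => 1 - z) (-1) y := by
        simpa using (hasDerivAt_id y).const_sub 1
      exact hbase.rpow_const (Or.inl h1y.ne')
    have := hpow.mul hf
    have hode := ode_fML hδ hy1
    have hsplit : (1 - y) ^ δ = (1 - y) ^ (δ - 1) * (1 - y) := by
      have h := Real.rpow_add h1y (δ - 1) 1
      rw [Real.rpow_one] at h
      rw [show δ - 1 + 1 = δ by ring] at h
      exact h
    refine this.congr_deriv ?_
    rw [hsplit]
    linear_combination ((1 - y) ^ (δ - 1)) * hode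
  have habs : ∀ y ∈ Ioo (-b) b, HasDerivAt g 0 y := hderiv
  have key : g x = g 0 := by
    rcases le_or_gt 0 x with hx0 | hx0
    · have hsub : Icc (0:ℝ) x ⊆ Ioo (-b) b := fun y hy =>
        ⟨by linarith [hy.1], lt_of_le_of_lt hy.2 (lt_of_abs_lt hxb)⟩
      have := constant_of_has_deriv_right_zero
        (fun y hy => ((habs y (hsub hy)).continuousAt).continuousWithinAt)
        (fun y hy => ((habs y (hsub (Ico_subset_Icc_self hy))).hasDerivWithinAt))
        x (right_mem_Icc.2 hx0)
      exact this
    · have hsub : Icc x (0:ℝ) ⊆ Ioo (-b) b := fun y hy =>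
        ⟨lt_of_lt_of_le (neg_lt_of_abs_lt hxb) hy.1, by linarith [hy.2]⟩
      have := constant_of_has_deriv_right_zero
        (fun y hy => ((habs y (hsub hy)).continuousAt).continuousWithinAt)
        (fun y hy => ((habs y (hsub (Ico_subset_Icc_self hy))).hasDerivWithinAt))
        0 (right_mem_Icc.2 hx0.le)
      exact this.symm
  have hg0 : g 0 = 1 := by
    rw [hg]
    simp only [sub_zero, Real.one_rpow, one_mul, fML]
    rw [tsum_eq_single 0 (fun r hr => by simp [zero_pow hr])]
    simpa using binomCoef_zero hδ
  have h1x : 0 < 1 - x := by have := (abs_lt.1 hx).2; linarith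
  have hne : (1 - x) ^ δ ≠ 0 := (Real.rpow_pos_of_pos h1x δ).ne'
  have hval : (1 - x) ^ δ * fML δ x = 1 := by
    have h := key.trans hg0
    simpa [hg] using h
  have hfval : fML δ x = (1 - x) ^ (-δ) := by
    rw [Real.rpow_neg h1x.le]
    exact eq_inv_of_mul_eq_one_left (by rw [mul_comm]; exact hval)
  have hsum := summable_pow hδ hx
  rw [← hfval]
  exact hsum.hasSum

lemma integrableOn_aux {a s : ℝ} (ha : 0 < a) (hs : 0 < s) :
    IntegrableOn (fun t : ℝ => t ^ (a - 1) * Real.exp (-(s * t))) (Ioi 0) := by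
  have h1 := Real.GammaIntegral_convergent ha
  have h2 : IntegrableOn (fun t : ℝ => Real.exp (-(s * t)) * (s * t) ^ (a - 1)) (Ioi 0) := by
    have := (integrableOn_Ioi_comp_mul_left_iff
      (fun x : ℝ => Real.exp (-x) * x ^ (a - 1)) 0 hs).2 (by simpa using h1)
    simpa using this
  have h3 : IntegrableOn (fun t : ℝ => s ^ (1 - a) *
      (Real.exp (-(s * t)) * (s * t) ^ (a - 1))) (Ioi 0) := h2.const_mul _
  refine (integrableOn_congr_fun (fun t ht => ?_) measurableSet_Ioi).1 h3
  have ht : (0:ℝ) < t := ht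
  rw [Real.mul_rpow hs.le ht.le,
    show s ^ (1-a) * (Real.exp (-(s*t)) * (s^(a-1) * t^(a-1)))
      = (s^(1-a) * s^(a-1)) * (Real.exp (-(s*t)) * t^(a-1)) from by ring,
    ← Real.rpow_add hs]
  norm_num
  ring

lemma integral_aux {a s : ℝ} (ha : 0 < a) (hs : 0 < s) :
    ∫ t in Ioi (0:ℝ), t ^ (a - 1) * Real.exp (-(s * t)) = (1 / s) ^ a * Real.Gamma a :=
  integral_rpow_mul_exp_neg_mul_Ioi ha hs

/-- Prabhakar's Laplace transform formula: for `ν, γ, δ > 0`, `s > 0` with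
`|ω| < s^ν`, `∫₀^∞ e^{−st} t^{γ−1} E^δ_{ν,γ}(ω t^ν) dt = s^{νδ−γ}/(s^ν − ω)^δ`, the
integrand being absolutely integrable on `(0,∞)`. -/
theorem stmt11 (ν γ δ ω s : ℝ) (hν : 0 < ν) (hγ : 0 < γ) (hδ : 0 < δ)
    (hs : 0 < s) (hω : |ω| < s ^ ν) :
    MeasureTheory.IntegrableOn
      (fun t : ℝ => Real.exp (-(s * t)) * t ^ (γ - 1) * prabhakarML ν γ δ (ω * t ^ ν))
      (Set.Ioi 0) ∧
    ∫ t in Set.Ioi (0:ℝ), Real.exp (-(s * t)) * t ^ (γ - 1) * prabhakarML ν γ δ (ω * t ^ ν) =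
      s ^ (ν * δ - γ) / (s ^ ν - ω) ^ δ := by
  have hsν : 0 < s ^ ν := Real.rpow_pos_of_pos hs ν
  set q : ℝ := ω / s ^ ν with hq
  have hqabs : |q| < 1 := by
    rw [hq, abs_div, abs_of_pos hsν, div_lt_one hsν]
    exact hω
  have ha : ∀ r : ℕ, (0:ℝ) < ν * r + γ := fun r => by positivity
  set g : ℕ → ℝ → ℝ := fun r t =>
    (binomCoef δ r * ω ^ r / Real.Gamma (ν * r + γ)) *
      (t ^ (ν * r + γ - 1) * Real.exp (-(s * t))) with hgdef
  -- pointwise identity on Ioi 0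
  have hpt : ∀ t ∈ Ioi (0:ℝ),
      Real.exp (-(s * t)) * t ^ (γ - 1) * prabhakarML ν γ δ (ω * t ^ ν) = ∑' r, g r t := by
    intro t ht
    have ht0 : (0:ℝ) < t := ht
    rw [prabhakarML, ← tsum_mul_left]
    refine tsum_congr fun r => ?_
    have htν : (t ^ ν) ^ (r:ℕ) = t ^ (ν * r) := by
      rw [← Real.rpow_natCast (t ^ ν) r, ← Real.rpow_mul ht0.le]
    have ht2 : t ^ (ν * r + γ - 1) = t ^ (γ - 1) * t ^ (ν * (r:ℕ)) := by
      rw [← Real.rpow_add ht0]; ring_nf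
    have hΓ1 : Real.Gamma δ ≠ 0 := (Real.Gamma_pos_of_pos hδ).ne'
    have hΓ2 : Real.Gamma (ν * r + γ) ≠ 0 := (Real.Gamma_pos_of_pos (ha r)).ne'
    have hfac : ((r.factorial : ℝ)) ≠ 0 := by exact_mod_cast r.factorial_ne_zero
    rw [hgdef]
    simp only
    rw [ht2, mul_pow, htν, binomCoef]
    field_simp
  -- integrability of each term
  have hint : ∀ r : ℕ, IntegrableOn (g r) (Ioi 0) := fun r =>
    (integrableOn_aux (ha r) hs).const_mul _
  -- measurability
  have hmeas : ∀ r : ℕ, AEStronglyMeasurable (g r) (volume.restrict (Ioi 0)) := fun r =>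
    (hint r).aestronglyMeasurable
  -- value of each integral
  have hval : ∀ r : ℕ, ∫ t in Ioi (0:ℝ), g r t
      = (binomCoef δ r * ω ^ r / Real.Gamma (ν * r + γ)) *
        ((1 / s) ^ (ν * r + γ) * Real.Gamma (ν * r + γ)) := by
    intro r
    rw [hgdef]
    simp only
    rw [integral_const_mul, integral_aux (ha r) hs]
  -- bound series
  set B : ℕ → ℝ := fun r => (binomCoef δ r * |ω| ^ r / Real.Gamma (ν * r + γ)) *
      ((1 / s) ^ (ν * r + γ) * Real.Gamma (ν * r + γ)) with hBdef
  have hBsimp : ∀ r : ℕ, B r = (1 / s) ^ γ * (binomCoef δ r * |q| ^ r) := by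
    intro r
    have hΓ2 : Real.Gamma (ν * r + γ) ≠ 0 := (Real.Gamma_pos_of_pos (ha r)).ne'
    have h1 : (1 / s) ^ (ν * (r:ℕ) + γ) = ((1/s) ^ ν) ^ (r:ℕ) * (1/s) ^ γ := by
      rw [Real.rpow_add (by positivity), ← Real.rpow_natCast ((1/s) ^ ν) r,
        ← Real.rpow_mul (by positivity)]
    have h2 : ((1/s) ^ ν) = 1 / s ^ ν := by
      rw [Real.div_rpow (by norm_num) hs.le, Real.one_rpow]
    have h3 : |q| ^ (r:ℕ) = |ω| ^ (r:ℕ) * (1 / s ^ ν) ^ (r:ℕ) := by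
      rw [← mul_pow, hq, abs_div, abs_of_pos hsν]
      ring_nf
    rw [hBdef]
    simp only
    rw [h1, h2, h3]
    field_simp
  have hBsum : Summable B := by
    refine ((summable_pow hδ (by rwa [abs_abs])).mul_left ((1/s) ^ γ)).congr fun r => ?_
    rw [hBsimp r]
  have hBnonneg : ∀ r, 0 ≤ B r := by
    intro r
    rw [hBsimp r]
    have := binomCoef_pos hδ r
    positivity
  -- norms
  have hnorm : ∀ r : ℕ, ∀ t ∈ Ioi (0:ℝ), ‖g r t‖
      = (binomCoef δ r * |ω| ^ r / Real.Gamma (ν * r + γ)) *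
        (t ^ (ν * r + γ - 1) * Real.exp (-(s * t))) := by
    intro r t ht
    have ht0 : (0:ℝ) < t := ht
    have h1 := binomCoef_pos hδ r
    have h2 := Real.Gamma_pos_of_pos (ha r)
    have h3 : (0:ℝ) < t ^ (ν * r + γ - 1) := Real.rpow_pos_of_pos ht0 _
    rw [hgdef]
    simp only
    rw [norm_mul, Real.norm_eq_abs, Real.norm_eq_abs, abs_div, abs_mul, abs_pow,
      abs_of_pos h1, abs_of_pos h2, abs_of_pos (mul_pos h3 (Real.exp_pos _))]
  -- lintegral of each norm
  have hlint : ∀ r : ℕ, ∫⁻ t in Ioi (0:ℝ), (‖g r t‖₊ : ℝ≥0∞) = ENNReal.ofReal (B r) := by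
    intro r
    have hgint : IntegrableOn (fun t => ‖g r t‖) (Ioi 0) := (hint r).norm
    rw [show (∫⁻ t in Ioi (0:ℝ), (‖g r t‖₊ : ℝ≥0∞)) = ∫⁻ t in Ioi (0:ℝ), ‖g r t‖ₑ from rfl, ← MeasureTheory.ofReal_integral_norm_eq_lintegral_enorm (hint r)]
    congr 1
    rw [setIntegral_congr_fun measurableSet_Ioi (fun t ht => hnorm r t ht)]
    rw [hBdef]
    simp only
    rw [integral_const_mul, integral_aux (ha r) hs]
  -- total lintegral finite
  have hlintsum : ∑' r : ℕ, ∫⁻ t in Ioi (0:ℝ), (‖g r t‖₊ : ℝ≥0∞) ≠ ⊤ := by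
    have : ∑' r : ℕ, ∫⁻ t in Ioi (0:ℝ), (‖g r t‖₊ : ℝ≥0∞)
        = ∑' r : ℕ, ENNReal.ofReal (B r) := tsum_congr fun r => hlint r
    rw [this, ← ENNReal.ofReal_tsum_of_nonneg hBnonneg hBsum]
    exact ENNReal.ofReal_ne_top
  -- a.e. summability
  have haes : ∀ᵐ t ∂(volume.restrict (Ioi 0)), Summable fun r => g r t := by
    have h0 : ∫⁻ t in Ioi (0:ℝ), ∑' r : ℕ, (‖g r t‖₊ : ℝ≥0∞) ≠ ⊤ := by
      rw [MeasureTheory.lintegral_tsum (f := fun r t => (‖g r t‖₊ : ℝ≥0∞)) fun r => (hmeas r).enorm]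
      exact hlintsum
    have h1 := MeasureTheory.ae_lt_top' (AEMeasurable.ennreal_tsum (f := fun r t => (‖g r t‖₊ : ℝ≥0∞)) fun r => (hmeas r).enorm) h0
    refine h1.mono fun t ht => ?_
    have := ENNReal.tsum_coe_ne_top_iff_summable_coe.1 ht.ne
    exact Summable.of_norm (by simpa using this)
  -- the tsum function
  set F : ℝ → ℝ := fun t => ∑' r, g r t with hFdef
  have hFmeas : AEStronglyMeasurable F (volume.restrict (Ioi 0)) := by
    refine aestronglyMeasurable_of_tendsto_ae atTop
      (f := fun N t => ∑ r ∈ Finset.range N, g r t) (fun N => ?_) ?_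
    · exact Finset.aestronglyMeasurable_fun_sum _ fun r _ => hmeas r
    · refine haes.mono fun t ht => ?_
      exact ht.hasSum.tendsto_sum_nat
  have hFfin : HasFiniteIntegral F (volume.restrict (Ioi 0)) := by
    rw [HasFiniteIntegral]
    calc ∫⁻ t in Ioi (0:ℝ), (‖F t‖₊ : ℝ≥0∞)
        ≤ ∫⁻ t in Ioi (0:ℝ), ∑' r : ℕ, (‖g r t‖₊ : ℝ≥0∞) := by
          refine lintegral_mono_ae (haes.mono fun t ht => ?_)
          have hsn : Summable fun r => ‖g r t‖ := ht.norm
          rw [← enorm_eq_nnnorm, ← ofReal_norm]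
          calc ENNReal.ofReal ‖F t‖ ≤ ENNReal.ofReal (∑' r, ‖g r t‖) :=
                ENNReal.ofReal_le_ofReal (norm_tsum_le_tsum_norm hsn)
            _ = ∑' r, ENNReal.ofReal ‖g r t‖ :=
                ENNReal.ofReal_tsum_of_nonneg (fun r => norm_nonneg _) hsn
            _ = ∑' r : ℕ, (‖g r t‖₊ : ℝ≥0∞) := by
                refine tsum_congr fun r => ?_
                rw [ofReal_norm, enorm_eq_nnnorm]
      _ < ⊤ := by
          rw [MeasureTheory.lintegral_tsum (f := fun r t => (‖g r t‖₊ : ℝ≥0∞)) fun r => (hmeas r).enorm]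
          exact hlintsum.lt_top
  have hFint : IntegrableOn F (Ioi 0) := ⟨hFmeas, hFfin⟩
  have hcongr : (fun t : ℝ => Real.exp (-(s * t)) * t ^ (γ - 1) * prabhakarML ν γ δ (ω * t ^ ν))
      =ᵐ[volume.restrict (Ioi 0)] F := by
    refine (ae_restrict_iff' measurableSet_Ioi).2 (Eventually.of_forall fun t ht => ?_)
    exact hpt t ht
  constructor
  · exact hFint.congr hcongr.symm
  · rw [MeasureTheory.integral_congr_ae hcongr]
    rw [hFdef]
    simp only
    rw [MeasureTheory.integral_tsum hmeas hlintsum]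
    have hvals : ∑' r : ℕ, ∫ t in Ioi (0:ℝ), g r t
        = (1 / s) ^ γ * ∑' r : ℕ, binomCoef δ r * q ^ r := by
      rw [← tsum_mul_left]
      refine tsum_congr fun r => ?_
      rw [hval r]
      have hΓ2 : Real.Gamma (ν * r + γ) ≠ 0 := (Real.Gamma_pos_of_pos (ha r)).ne'
      have h1 : (1 / s) ^ (ν * (r:ℕ) + γ) = ((1/s) ^ ν) ^ (r:ℕ) * (1/s) ^ γ := by
        rw [Real.rpow_add (by positivity), ← Real.rpow_natCast ((1/s) ^ ν) r,
          ← Real.rpow_mul (by positivity)]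
      have h2 : ((1/s) ^ ν) = 1 / s ^ ν := by
        rw [Real.div_rpow (by norm_num) hs.le, Real.one_rpow]
      have h3 : q ^ (r:ℕ) = ω ^ (r:ℕ) * (1 / s ^ ν) ^ (r:ℕ) := by
        rw [← mul_pow, hq]
        ring_nf
      rw [h1, h2, h3]
      field_simp
    rw [hvals, (hasSum_binomial hδ hqabs).tsum_eq]
    -- final algebra
    have hsub : 0 < s ^ ν - ω := by
      have := (abs_lt.1 hω).2
      linarith
    have h1q : 1 - q = (s ^ ν - ω) / s ^ ν := by
      rw [hq]
      field_simp
    rw [h1q, Real.rpow_neg (by positivity), Real.div_rpow hsub.le hsν.le]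
    rw [Real.div_rpow (by norm_num) hs.le, Real.one_rpow]
    have h4 : (s ^ ν) ^ δ = s ^ (ν * δ) := by
      rw [← Real.rpow_mul hs.le]
    have h5 : s ^ (ν * δ - γ) = s ^ (ν * δ) / s ^ γ := by
      rw [← Real.rpow_sub hs]
    rw [h4, h5]
    have h6 : (0:ℝ) < (s ^ ν - ω) ^ δ := Real.rpow_pos_of_pos hsub δ
    have h7 : (0:ℝ) < s ^ γ := Real.rpow_pos_of_pos hs γ
    have h8 : (0:ℝ) < s ^ (ν * δ) := Real.rpow_pos_of_pos hs _
    field_simp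
end

section
/- Let 0 < β < 1, λ > 0, n ∈ ℕ, and let s > 0 satisfy λ < s^β. Define p(n,t) = ((λ t^β)^n / n!) · ∑_{r=0}^∞ ((n+r)!/r!) · (−λ t^β)^r / Γ(β(r+n) + 1) for t > 0. Then ∫₀^∞ e^{−st} p(n,t) dt = (s^{β−1}/(λ + s^β)) · (λ^n/(λ + s^β)^n). -/
open Set Filter Topology MeasureTheory Real

private lemma stmt12_integrable {a s : ℝ} (ha : 0 < a) (hs : 0 < s) :
    MeasureTheory.IntegrableOn (fun t : ℝ => t ^ (a - 1) * Real.exp (-(s * t)))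
      (Set.Ioi (0:ℝ)) := by
  have h0 := Real.GammaIntegral_convergent ha
  rw [show (0:ℝ) = s * 0 by ring,
    ← MeasureTheory.integrableOn_Ioi_comp_mul_left_iff _ 0 hs] at h0
  -- h0 : IntegrableOn (fun t => exp (-(s*t)) * (s*t)^(a-1)) (Ioi 0)
  have h1 : MeasureTheory.IntegrableOn
      (fun t : ℝ => (s ^ (a-1))⁻¹ * (Real.exp (-(s * t)) * (s * t) ^ (a - 1)))
      (Set.Ioi (0:ℝ)) := h0.const_mul _
  refine h1.congr_fun (fun t ht => ?_) measurableSet_Ioi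
  have ht0 : (0:ℝ) < t := ht
  dsimp only
  rw [Real.mul_rpow hs.le ht0.le]
  have hsa : s ^ (a-1) ≠ 0 := ne_of_gt (Real.rpow_pos_of_pos hs _)
  field_simp

/-- the Laplace transform of the fractional Poisson probability mass function
`p(n,t) = ((λ t^β)^n/n!) ∑_{r=0}^∞ ((n+r)!/r!) (−λ t^β)^r / Γ(β(r+n)+1)` is
`(s^{β−1}/(λ+s^β)) ⬝ (λ^n/(λ+s^β)^n)` for `s > 0` with `λ < s^β`. -/
theorem stmt12 (β lam s : ℝ) (n : ℕ) (hβ0 : 0 < β) (hβ1 : β < 1) (hlam : 0 < lam)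
    (hs : 0 < s) (hls : lam < s ^ β)
    (p : ℕ → ℝ → ℝ)
    (hp : ∀ t : ℝ, 0 < t → p n t =
      ((lam * t ^ β) ^ n / (Nat.factorial n : ℝ)) *
        ∑' r : ℕ, ((Nat.factorial (n + r) : ℝ) / (Nat.factorial r : ℝ)) *
          (-(lam * t ^ β)) ^ r / Real.Gamma (β * (r + n) + 1)) :
    ∫ t in Set.Ioi (0:ℝ), Real.exp (-(s * t)) * p n t =
      (s ^ (β - 1) / (lam + s ^ β)) * (lam ^ n / (lam + s ^ β) ^ n) := by
  set A : ℝ := s ^ β with hA_def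
  have hA : 0 < A := Real.rpow_pos_of_pos hs β
  set x : ℝ := lam / A with hx_def
  have hx0 : 0 < x := div_pos hlam hA
  have hx1 : x < 1 := (div_lt_one hA).2 hls
  have hxn : ‖x‖ < 1 := by rw [Real.norm_eq_abs, abs_of_pos hx0]; exact hx1
  set a : ℕ → ℝ := fun r => β * ((r : ℝ) + n) + 1 with ha_def
  have ha : ∀ r : ℕ, 0 < a r := by
    intro r
    simp only [ha_def]
    positivity
  set c : ℕ → ℝ := fun r =>
    (lam ^ n / (Nat.factorial n : ℝ)) *
      (((Nat.factorial (n + r) : ℝ) / (Nat.factorial r : ℝ)) * (-lam) ^ r) /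
        Real.Gamma (a r) with hc_def
  set F : ℕ → ℝ → ℝ := fun r t => c r * (t ^ (a r - 1) * Real.exp (-(s * t))) with hF_def
  -- factorial over factorial as choose
  have hfac : ∀ r : ℕ, ((Nat.factorial (n + r) : ℝ) / (Nat.factorial r : ℝ)) =
      (((r + n).choose n : ℝ)) * (Nat.factorial n : ℝ) := by
    intro r
    rw [div_eq_iff (by positivity : ((Nat.factorial r : ℝ)) ≠ 0)]
    have h := Nat.add_choose_mul_factorial_mul_factorial r n
    rw [add_comm n r]
    push_cast [← h]
    ring
  -- pointwise identity on Ioi 0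
  have key : ∀ t ∈ Set.Ioi (0:ℝ), Real.exp (-(s * t)) * p n t = ∑' r : ℕ, F r t := by
    intro t ht
    have ht0 : (0:ℝ) < t := ht
    have htβ : (0:ℝ) < t ^ β := Real.rpow_pos_of_pos ht0 β
    rw [hp t ht0]
    rw [show Real.exp (-(s * t)) * ((lam * t ^ β) ^ n / (Nat.factorial n : ℝ) *
        ∑' r : ℕ, ((Nat.factorial (n + r) : ℝ) / (Nat.factorial r : ℝ)) *
          (-(lam * t ^ β)) ^ r / Real.Gamma (β * (r + n) + 1)) =
      (Real.exp (-(s * t)) * ((lam * t ^ β) ^ n / (Nat.factorial n : ℝ))) *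
        ∑' r : ℕ, ((Nat.factorial (n + r) : ℝ) / (Nat.factorial r : ℝ)) *
          (-(lam * t ^ β)) ^ r / Real.Gamma (β * (r + n) + 1) by ring]
    rw [← tsum_mul_left]
    refine tsum_congr fun r => ?_
    have h1 : t ^ (a r - 1) = (t ^ β) ^ r * (t ^ β) ^ n := by
      have : a r - 1 = β * ((r : ℝ) + n) := by simp [ha_def]
      rw [this, Real.rpow_mul ht0.le, Real.rpow_add htβ, Real.rpow_natCast, Real.rpow_natCast]
    simp only [hF_def, h1, hc_def]
    rw [show (-(lam * t ^ β)) ^ r = (-lam) ^ r * (t ^ β) ^ r by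
      rw [← mul_pow]; ring_nf]
    rw [mul_pow lam (t ^ β) n]
    have hΓ : Real.Gamma (β * ((r:ℝ) + n) + 1) = Real.Gamma (a r) := by simp [ha_def]
    rw [hΓ]
    ring
  -- integrability of each F r
  have hInt : ∀ r : ℕ, MeasureTheory.IntegrableOn (F r) (Set.Ioi (0:ℝ)) := fun r =>
    (stmt12_integrable (ha r) hs).const_mul _
  -- value of each integral
  have hI : ∀ r : ℕ, ∫ t in Set.Ioi (0:ℝ), F r t =
      c r * ((1 / s) ^ (a r) * Real.Gamma (a r)) := by
    intro r
    simp only [hF_def]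
    rw [MeasureTheory.integral_const_mul, integral_rpow_mul_exp_neg_mul_Ioi (ha r) hs]
  -- value of the norm integrals
  have hN : ∀ r : ℕ, (∫ t in Set.Ioi (0:ℝ), ‖F r t‖) =
      |c r| * ((1 / s) ^ (a r) * Real.Gamma (a r)) := by
    intro r
    have heq : ∀ t ∈ Set.Ioi (0:ℝ), ‖F r t‖ =
        |c r| * (t ^ (a r - 1) * Real.exp (-(s * t))) := by
      intro t ht
      have ht0 : (0:ℝ) < t := ht
      simp only [hF_def, Real.norm_eq_abs, abs_mul]
      congr 1
      rw [abs_of_pos (Real.rpow_pos_of_pos ht0 _), abs_of_pos (Real.exp_pos _)]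
    rw [MeasureTheory.setIntegral_congr_fun measurableSet_Ioi heq,
      MeasureTheory.integral_const_mul, integral_rpow_mul_exp_neg_mul_Ioi (ha r) hs]
  -- decomposition of (1/s)^(a r)
  have h1s : (0:ℝ) < 1 / s := by positivity
  have hsplit : ∀ r : ℕ, (1 / s : ℝ) ^ (a r) = (A⁻¹) ^ r * (1 / s) ^ (β * (n:ℝ) + 1) := by
    intro r
    have e0 : a r = β * (r : ℝ) + (β * (n:ℝ) + 1) := by simp [ha_def]; ring
    rw [e0, Real.rpow_add h1s, Real.rpow_mul h1s.le, Real.rpow_natCast]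
    congr 2
    rw [one_div, Real.inv_rpow hs.le]
  have habs : ∀ r : ℕ, |c r| =
      (lam ^ n / (Nat.factorial n : ℝ)) *
        (((Nat.factorial (n + r) : ℝ) / (Nat.factorial r : ℝ)) * lam ^ r) /
          Real.Gamma (a r) := by
    intro r
    simp only [hc_def]
    rw [abs_div, abs_mul, abs_mul, abs_pow, abs_neg,
      abs_of_pos hlam, abs_of_pos (Real.Gamma_pos_of_pos (ha r)),
      abs_of_pos (by positivity : (0:ℝ) < lam ^ n / (Nat.factorial n : ℝ)),
      abs_of_pos (by positivity : (0:ℝ) <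
        (Nat.factorial (n + r) : ℝ) / (Nat.factorial r : ℝ))]
  -- summability of norm integrals
  have hΓne : ∀ r : ℕ, Real.Gamma (a r) ≠ 0 := fun r =>
    ne_of_gt (Real.Gamma_pos_of_pos (ha r))
  have hsumex : ∀ r : ℕ, |c r| * ((1 / s) ^ (a r) * Real.Gamma (a r)) =
      (lam ^ n * (1 / s) ^ (β * (n:ℝ) + 1)) * (((r + n).choose n : ℝ) * x ^ r) := by
    intro r
    rw [habs r, hsplit r, hfac r]
    have hxr : lam ^ r * (A⁻¹) ^ r = x ^ r := by
      rw [← mul_pow, ← div_eq_mul_inv]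
    rw [← hxr]
    field_simp
    rw [mul_div_cancel_right₀ _ (hΓne r)]
  have hsum : Summable fun r : ℕ => ∫ t in Set.Ioi (0:ℝ), ‖F r t‖ := by
    refine Summable.congr ?_ fun r => ((hN r).trans (hsumex r)).symm
    exact (summable_choose_mul_geometric_of_norm_lt_one n hxn).mul_left _
  -- interchange sum and integral
  have hmain : (∑' r : ℕ, ∫ t in Set.Ioi (0:ℝ), F r t) =
      ∫ t in Set.Ioi (0:ℝ), Real.exp (-(s * t)) * p n t := by
    rw [MeasureTheory.integral_tsum_of_summable_integral_norm hInt hsum]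
    exact (MeasureTheory.setIntegral_congr_fun measurableSet_Ioi key).symm
  rw [← hmain]
  -- compute the sum
  have hterm : ∀ r : ℕ, (∫ t in Set.Ioi (0:ℝ), F r t) =
      (lam ^ n * (1 / s) ^ (β * (n:ℝ) + 1)) * (((r + n).choose n : ℝ) * (-x) ^ r) := by
    intro r
    rw [hI r, hsplit r]
    simp only [hc_def]
    rw [hfac r]
    have hxr : (-lam) ^ r * (A⁻¹) ^ r = (-x) ^ r := by
      rw [← mul_pow]; congr 1; rw [← div_eq_mul_inv, neg_div]
    rw [← hxr]
    field_simp
    rw [mul_div_cancel_right₀ _ (hΓne r)]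
  have hxn' : ‖-x‖ < 1 := by rwa [norm_neg]
  have hsum2 : (∑' r : ℕ, ∫ t in Set.Ioi (0:ℝ), F r t) =
      (lam ^ n * (1 / s) ^ (β * (n:ℝ) + 1)) * (1 / (1 + x) ^ (n + 1)) := by
    rw [tsum_congr hterm, tsum_mul_left,
      tsum_choose_mul_geometric_of_norm_lt_one n hxn']
    rw [sub_neg_eq_add]
  rw [hsum2]
  -- final algebra
  have h1px : 1 + x = (lam + A) / A := by
    field_simp [hx_def]
    rw [hx_def, add_mul, div_mul_cancel₀ _ hA.ne']; ring
  have hlA : (0:ℝ) < lam + A := by positivity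
  have hApow : (A : ℝ) ^ (n + 1) = s ^ (β * ((n:ℝ) + 1)) := by
    rw [hA_def, ← Real.rpow_natCast (s ^ β) (n + 1), ← Real.rpow_mul hs.le]
    push_cast
    ring_nf
  have hspow : s ^ (β * ((n:ℝ) + 1)) / s ^ (β * (n:ℝ) + 1) = s ^ (β - 1) := by
    rw [← Real.rpow_sub hs]
    congr 1
    ring
  rw [h1px, div_pow, one_div ((lam + A) ^ (n+1) / A ^ (n+1)), inv_div, hApow]
  rw [one_div s, Real.inv_rpow hs.le, ← one_div]
  rw [show lam ^ n * (1 / s ^ (β * (n:ℝ) + 1)) *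
      (s ^ (β * ((n:ℝ) + 1)) / (lam + A) ^ (n + 1)) =
      lam ^ n * (s ^ (β * ((n:ℝ) + 1)) / s ^ (β * (n:ℝ) + 1)) / (lam + A) ^ (n + 1) by
    ring]
  rw [hspow, pow_succ]
  field_simp
end

section
/- Let 0 < β < 1, λ > 0 and n ∈ ℕ. Suppose h : (0,∞) × (0,∞) → ℝ is nonnegative and measurable, for each fixed x > 0 and s > 0 the function t ↦ e^{−st} h(x,t) is integrable, and ∫₀^∞ e^{−st} h(x,t) dt = s^{β−1} e^{−x s^β} for all x > 0 and s > 0. Then for every s > 0, ∫₀^∞ e^{−st} ( ∫₀^∞ e^{−λx} ((λx)^n/n!) h(x,t) dx ) dt = s^{β−1} λ^n / (λ + s^β)^{n+1}. -/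
open Set Filter Topology MeasureTheory Real

/-- if `h(x,t)` is nonnegative and measurable with Laplace transform in `t`
equal to `s^{β−1} e^{−x s^β}` for every `x > 0`, then the double Laplace transform of the
time-changed Poisson probability `∫₀^∞ e^{−λx} ((λx)^n/n!) h(x,t) dx` equals
`s^{β−1} λ^n / (λ + s^β)^{n+1}`. -/
theorem stmt13 (β lam : ℝ) (n : ℕ) (hβ0 : 0 < β) (hβ1 : β < 1) (hlam : 0 < lam)
    (h : ℝ → ℝ → ℝ)
    (hmeas : Measurable fun p : ℝ × ℝ => h p.1 p.2)
    (hnn : ∀ x t : ℝ, 0 < x → 0 < t → 0 ≤ h x t)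
    (hint : ∀ x : ℝ, 0 < x → ∀ s : ℝ, 0 < s →
      MeasureTheory.IntegrableOn (fun t => Real.exp (-(s * t)) * h x t) (Set.Ioi 0))
    (hlap : ∀ x : ℝ, 0 < x → ∀ s : ℝ, 0 < s →
      ∫ t in Set.Ioi (0:ℝ), Real.exp (-(s * t)) * h x t =
        s ^ (β - 1) * Real.exp (-(x * s ^ β))) :
    ∀ s : ℝ, 0 < s →
      ∫ t in Set.Ioi (0:ℝ), Real.exp (-(s * t)) *
          (∫ x in Set.Ioi (0:ℝ),
            Real.exp (-(lam * x)) * ((lam * x) ^ n / (Nat.factorial n : ℝ)) * h x t) =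
        s ^ (β - 1) * lam ^ n / (lam + s ^ β) ^ (n + 1) := by
  intro s hs
  set g : ℝ → ℝ := fun x => Real.exp (-(lam * x)) * ((lam * x) ^ n / (Nat.factorial n : ℝ)) with hg
  set μ := volume.restrict (Ioi (0:ℝ)) with hμ
  set r : ℝ := lam + s ^ β with hrdef
  have hsβ : 0 < s ^ β := Real.rpow_pos_of_pos hs β
  have hrpos : 0 < r := by positivity
  have hgnn : ∀ x : ℝ, 0 < x → 0 ≤ g x := by
    intro x hx
    have h1 : 0 < lam * x := by positivity
    positivity
  -- F t x
  set F : ℝ → ℝ → ℝ := fun t x => Real.exp (-(s * t)) * (g x * h x t) with hF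
  -- measurability
  have hFmeas : AEStronglyMeasurable (Function.uncurry F) (μ.prod μ) := by
    have hswap : Measurable fun p : ℝ × ℝ => h p.2 p.1 := hmeas.comp measurable_swap
    apply Measurable.aestronglyMeasurable
    fun_prop
  -- integrability in t for each x > 0
  have key1 : ∀ x : ℝ, 0 < x → Integrable (fun t => F t x) μ := by
    intro x hx
    have h1 := (hint x hx s hs).const_mul (g x)
    have : (fun t => F t x) = fun t => g x * (Real.exp (-(s * t)) * h x t) := by
      funext t; simp only [hF]; ring
    rw [this]; exact h1
  -- value of the t-integral
  have key2 : ∀ x : ℝ, 0 < x →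
      ∫ t, F t x ∂μ = g x * (s ^ (β - 1) * Real.exp (-(x * s ^ β))) := by
    intro x hx
    have : (fun t => F t x) = fun t => g x * (Real.exp (-(s * t)) * h x t) := by
      funext t; simp only [hF]; ring
    rw [this, MeasureTheory.integral_const_mul, hμ, hlap x hx s hs]
  -- nonnegativity of F a.e.
  have hFnn : ∀ x : ℝ, 0 < x → ∀ᵐ t ∂μ, 0 ≤ F t x := by
    intro x hx
    rw [hμ, ae_restrict_iff' measurableSet_Ioi]
    filter_upwards with t ht
    exact mul_nonneg (Real.exp_nonneg _) (mul_nonneg (hgnn x hx) (hnn x t hx ht))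
  -- the explicit majorant G
  set G : ℝ → ℝ := fun x => g x * (s ^ (β - 1) * Real.exp (-(x * s ^ β))) with hG
  have hGint : Integrable G μ := by
    have hbase : IntegrableOn (fun x : ℝ => x ^ (n:ℝ) * Real.exp (-r * x ^ (1:ℝ))) (Ioi 0) := by
      refine integrableOn_rpow_mul_exp_neg_mul_rpow ?_ zero_lt_one hrpos
      exact lt_of_lt_of_le (by norm_num) (Nat.cast_nonneg n)
    have hc : IntegrableOn (fun x : ℝ => (lam ^ n / (Nat.factorial n : ℝ) * s ^ (β - 1)) *
        (x ^ (n:ℝ) * Real.exp (-r * x ^ (1:ℝ)))) (Ioi 0) := hbase.const_mul _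
    refine (hc.congr_fun ?_ measurableSet_Ioi : Integrable _ μ)
    intro x hx
    have hexp : Real.exp (-r * x) = Real.exp (-(lam * x)) * Real.exp (-(x * s ^ β)) := by
      rw [← Real.exp_add]; congr 1; rw [hrdef]; ring
    simp only [hG, hg, Real.rpow_one, Real.rpow_natCast]
    rw [mul_pow, hexp]
    ring
  -- integrability on product
  have hFint : Integrable (Function.uncurry F) (μ.prod μ) := by
    rw [integrable_prod_iff' hFmeas]
    constructor
    · rw [hμ, ae_restrict_iff' measurableSet_Ioi]
      filter_upwards with x hx
      exact key1 x hx
    · have : ∀ᵐ x ∂μ, (fun y => ∫ t, ‖Function.uncurry F (t, y)‖ ∂μ) x = G x := by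
        rw [hμ, ae_restrict_iff' measurableSet_Ioi]
        filter_upwards with x hx
        have : ∫ t, ‖F t x‖ ∂μ = ∫ t, F t x ∂μ := by
          refine integral_congr_ae ?_
          filter_upwards [hFnn x hx] with t ht
          exact Real.norm_of_nonneg ht
        simp only [Function.uncurry]
        rw [this, key2 x hx]
      exact hGint.congr (by filter_upwards [this] with x hx using hx.symm)
  -- now swap
  have hswap := integral_integral_swap hFint
  -- rewrite LHS
  have lhs_eq : ∫ t in Set.Ioi (0:ℝ), Real.exp (-(s * t)) *
      (∫ x in Set.Ioi (0:ℝ), g x * h x t) = ∫ t, ∫ x, F t x ∂μ ∂μ := by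
    refine integral_congr_ae ?_
    filter_upwards with t
    rw [← MeasureTheory.integral_const_mul]
  rw [show (∫ t in Set.Ioi (0:ℝ), Real.exp (-(s * t)) *
          (∫ x in Set.Ioi (0:ℝ),
            Real.exp (-(lam * x)) * ((lam * x) ^ n / (Nat.factorial n : ℝ)) * h x t)) =
      ∫ t in Set.Ioi (0:ℝ), Real.exp (-(s * t)) * (∫ x in Set.Ioi (0:ℝ), g x * h x t) from rfl,
    lhs_eq, hswap]
  -- RHS: ∫ x, ∫ t, F t x = ∫ x, G x
  have rhs1 : ∫ x, ∫ t, F t x ∂μ ∂μ = ∫ x, G x ∂μ := by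
    refine integral_congr_ae ?_
    filter_upwards [self_mem_ae_restrict measurableSet_Ioi] with x hx
    exact key2 x hx
  rw [rhs1]
  -- compute ∫ G
  have hGval : ∫ x, G x ∂μ = s ^ (β - 1) * lam ^ n / r ^ (n + 1) := by
    have step : ∫ x, G x ∂μ = (lam ^ n / (Nat.factorial n : ℝ) * s ^ (β - 1)) *
        ∫ x in Ioi (0:ℝ), x ^ ((n:ℝ) + 1 - 1) * Real.exp (-(r * x)) := by
      rw [← MeasureTheory.integral_const_mul]
      refine setIntegral_congr_fun measurableSet_Ioi ?_
      intro x hx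
      have hexp : Real.exp (-(r * x)) = Real.exp (-(lam * x)) * Real.exp (-(x * s ^ β)) := by
        rw [← Real.exp_add]; congr 1; rw [hrdef]; ring
      simp only [hG, hg]
      rw [show (n:ℝ) + 1 - 1 = (n:ℝ) by ring, Real.rpow_natCast, mul_pow, hexp]
      ring
    rw [step, integral_rpow_mul_exp_neg_mul_Ioi (by positivity) hrpos]
    rw [show ((n:ℝ) + 1) = ((n + 1 : ℕ) : ℝ) by push_cast; ring, Real.rpow_natCast]
    rw [show ((n + 1 : ℕ) : ℝ) = (n : ℝ) + 1 by push_cast; ring, Real.Gamma_nat_eq_factorial]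
    have hfac : (Nat.factorial n : ℝ) ≠ 0 := Nat.cast_ne_zero.mpr (Nat.factorial_ne_zero n)
    rw [div_pow, one_pow]
    field_simp
  rw [hGval]
end
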